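/- arXiv:1901.08575 — 5 statements merged into one kernel-verified Lean document; each statement's English description precedes it below -/
import Mathlib

section
/- Let m be a nonempty finite word over the four unit directions of ℤ² such that the walk following m·m starting at the origin is self-avoiding. Then the bi-infinite walk ⋯m·m·m⋯ (infinitely many copies of m in both directions) through the origin is self-avoiding, i.e., for all integers i ≠ j and all positions s, t within one copy of m with (i,s) ≠ (j,t), the corresponding lattice points i·⟨m⟩ + partial-sum differ, where ⟨m⟩ is the displacement vector of m. -/
/-- The four unit directions of ℤ². -/
def Dir : Set (ℤ × ℤ) := {(1,0), (0,1), (0,-1), (-1,0)}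

/-- Partial sum of the first `n` letters of a word: the `n`-th point of the walk from 0. -/
def psum (m : List (ℤ × ℤ)) (n : ℕ) : ℤ × ℤ := (m.take n).sum

/-- A word is self-avoiding (a free path) if the walk from the origin visits no point twice. -/
def SelfAvoiding (m : List (ℤ × ℤ)) : Prop :=
  Function.Injective fun n : Fin (m.length + 1) => psum m n

namespace SAW
noncomputable section

attribute [local instance] Classical.propDecidable

lemma smul_pair (j : ℤ) (p : ℤ × ℤ) : j • p = (j * p.1, j * p.2) := rfl

lemma abs_mul_ge_two {k w : ℤ} (hk : 2 ≤ |k|) (hw : w ≠ 0) : 2 ≤ |k * w| := by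
  rw [abs_mul]
  have h1 : 1 ≤ |w| := by have := abs_pos.2 hw; omega
  nlinarith [abs_nonneg k]

lemma ex_unique_t {v1 : ℤ} (hv : v1 ≠ 0) {X Y t0 : ℤ} (h : X = Y + t0 * v1) (B : ℤ → Prop) :
    (∃ t, X = Y + t * v1 ∧ B t) ↔ B t0 := by
  constructor
  · rintro ⟨t, h1, h2⟩
    have h3 : (t - t0) * v1 = 0 := by nlinarith [h1, h]
    rcases mul_eq_zero.1 h3 with h' | h'
    · have : t = t0 := by omega
      subst this; exact h2
    · exact absurd h' hv
  · intro hb; exact ⟨t0, h, hb⟩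

lemma ite_ex {v1 : ℤ} (hv : v1 ≠ 0) {X Y t0 : ℤ} (h : X = Y + t0 * v1) (B : ℤ → Prop) (a b : ℤ) :
    (if (∃ t, X = Y + t * v1 ∧ B t) then a else b) = (if B t0 then a else b) :=
  if_congr (ex_unique_t hv h B) rfl rfl

lemma ico_top (a b : ℤ) (h : a ≤ b) (f : ℤ → ℤ) :
    ∑ k ∈ Finset.Ico a (b + 1), f k = ∑ k ∈ Finset.Ico a b, f k + f b := by
  have h1 : Finset.Ico a (b+1) = insert b (Finset.Ico a b) := by
    ext x; simp [Finset.mem_Ico, Finset.mem_insert]; omega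
  rw [h1, Finset.sum_insert (by simp)]; ring

lemma ico_bot (a b : ℤ) (h : a ≤ b) (f : ℤ → ℤ) :
    ∑ k ∈ Finset.Ico a (b + 1), f k = f a + ∑ k ∈ Finset.Ico (a+1) (b+1), f k := by
  have h1 : Finset.Ico a (b+1) = insert a (Finset.Ico (a+1) (b+1)) := by
    ext x; simp [Finset.mem_Ico, Finset.mem_insert]; omega
  rw [h1, Finset.sum_insert (by simp)]

lemma tele_nat (g : ℤ → ℤ) (a : ℤ) : ∀ (l : ℕ),
    ∑ n ∈ Finset.Ico a (a + (l:ℤ)), (g (n+1) - g n) = g (a + l) - g a := by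
  intro l
  induction l with
  | zero => simp
  | succ i ih =>
      have h1 : a + ((i:ℤ)+1) = (a + i) + 1 := by ring
      rw [Nat.cast_add, Nat.cast_one, h1, ico_top a (a+i) (by omega), ih]
      ring

lemma tele (g : ℤ → ℤ) (a b : ℤ) (hab : a ≤ b) :
    ∑ n ∈ Finset.Ico a b, (g (n+1) - g n) = g b - g a := by
  have h1 : b = a + ((b - a).toNat : ℤ) := by omega
  rw [h1]; exact tele_nat g a _

/-- the floor-division jump identity -/
lemma div_jump (Mv a : ℤ) (hMv : 0 < Mv) :
    a / Mv - (a - 1) / Mv = if Mv ∣ a then 1 else 0 := by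
  have hq := Int.mul_ediv_add_emod a Mv
  have hr0 : 0 ≤ a % Mv := Int.emod_nonneg a (by omega)
  have hr1 : a % Mv < Mv := Int.emod_lt_of_pos a hMv
  by_cases hr : a % Mv = 0
  · have hdvd : Mv ∣ a := Int.dvd_of_emod_eq_zero hr
    rw [if_pos hdvd]
    have expand : Mv * (a / Mv - 1) = Mv * (a / Mv) - Mv := by ring
    have h2 : (a - 1) / Mv = a / Mv - 1 := by
      have := (Int.ediv_emod_unique (a := a - 1) (b := Mv)
        (r := Mv - 1) (q := a / Mv - 1) hMv).2 ⟨by omega, by omega, by omega⟩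
      exact this.1
    omega
  · have hndvd : ¬ Mv ∣ a := by
      intro hd
      exact hr (Int.emod_eq_zero_of_dvd hd)
    rw [if_neg hndvd]
    have h2 : (a - 1) / Mv = a / Mv := by
      have := (Int.ediv_emod_unique (a := a - 1) (b := Mv)
        (r := a % Mv - 1) (q := a / Mv) hMv).2 ⟨by omega, by omega, by omega⟩
      exact this.1
    omega

structure Cfg : Type where
  f : ℤ → ℤ × ℤ
  v : ℤ × ℤ
  N : ℤ
  k : ℤ
  hN : 1 ≤ N
  hk : 2 ≤ |k|
  hv1 : v.1 ≠ 0
  hA : ∀ n, f (n+1) - f n ∈ Dir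
  hB : ∀ n, f (n + N) = f n + k • v
  hC : ∀ a b j, f a - f b = j • v → ∃ q, a - b = q * N ∧ j = q * k

namespace Cfg
variable (C : Cfg)

def d (n : ℤ) : ℤ × ℤ := C.f (n+1) - C.f n

lemma f_step (n : ℤ) : C.f (n+1) = C.f n + C.d n := by simp [d]

lemma dir_cases (n : ℤ) : C.d n = (1,0) ∨ C.d n = (0,1) ∨ C.d n = (0,-1) ∨ C.d n = (-1,0) := by
  have := C.hA n
  simpa [Dir, d] using this

lemma hCpt {a b t : ℤ} (h : C.f a = C.f b + t • C.v) : ∃ q, a - b = q * C.N ∧ t = q * C.k := by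
  apply C.hC; rw [h]; abel

lemma f_inj {a b : ℤ} (h : C.f a = C.f b) : a = b := by
  obtain ⟨q, hq1, hq2⟩ := C.hCpt (t := 0) (by simpa using h)
  have hk := C.hk
  have hN := C.hN
  rcases mul_eq_zero.1 hq2.symm with h0 | h0
  · subst h0; simp at hq1; omega
  · rw [h0] at hk; simp at hk

lemma f_per (q : ℤ) : ∀ n, C.f (n + q * C.N) = C.f n + (q * C.k) • C.v := by
  induction q using Int.induction_on with
  | zero => simp
  | succ i ih =>
      intro n
      have h1 : n + ((i:ℤ)+1) * C.N = (n + (i:ℤ) * C.N) + C.N := by ring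
      have hs : (((i:ℤ) + 1) * C.k) • C.v = ((i:ℤ) * C.k) • C.v + C.k • C.v := by
        rw [← add_smul]; congr 1; ring
      rw [h1, C.hB, ih, hs, add_assoc]
  | pred i ih =>
      intro n
      have e1 := C.hB (n + (-(i:ℤ)-1) * C.N)
      have e2 : n + (-(i:ℤ)-1)*C.N + C.N = n + (-(i:ℤ))*C.N := by ring
      rw [e2] at e1
      have e3 : C.f (n + (-(i:ℤ))*C.N) = C.f n + ((-(i:ℤ))*C.k) • C.v := ih n
      have hs : ((-(i:ℤ)) * C.k) • C.v = ((-(i:ℤ)-1) * C.k) • C.v + C.k • C.v := by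
        rw [← add_smul]; congr 1; ring
      have e4 : C.f (n + (-(i:ℤ)-1)*C.N) + C.k • C.v
          = (C.f n + ((-(i:ℤ)-1) * C.k) • C.v) + C.k • C.v := by
        rw [← e1, e3, hs, add_assoc]
      exact add_right_cancel e4

lemma d_per (q n : ℤ) : C.d (n + q * C.N) = C.d n := by
  have h1 : n + q * C.N + 1 = (n + 1) + q * C.N := by ring
  simp only [d, h1, C.f_per q]
  abel

lemma N2 : 2 ≤ C.N := by
  by_contra h
  have hN1 : C.N = 1 := by have := C.hN; omega
  have hB := C.hB 0
  rw [hN1] at hB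
  have h2 : C.d 0 = C.k • C.v := by rw [d, hB]; abel
  have h3 := C.dir_cases 0
  rw [h2] at h3
  have habs := abs_mul_ge_two C.hk C.hv1
  rcases h3 with h|h|h|h <;>
  · rw [smul_pair] at h
    have e1 := congrArg Prod.fst h
    have e2 := congrArg Prod.snd h
    simp at e1 e2
    first
    | (rw [e1] at habs; simp at habs)
    | (rcases e1 with h0 | h0
       · rw [h0] at habs; simp at habs
       · exact C.hv1 h0)


/-! ## Winding machinery -/

/-- Crossing contribution of step `n` to the union of downward rays at cells `c + t•v`. -/
def crv (c : ℤ × ℤ) (n : ℤ) : ℤ :=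
  if C.d n = (1,0) then
    (if ∃ t, (C.f n).1 = c.1 + t * C.v.1 ∧ (C.f n).2 ≤ c.2 + t * C.v.2 then 1 else 0)
  else if C.d n = (-1,0) then
    (if ∃ t, (C.f n).1 - 1 = c.1 + t * C.v.1 ∧ (C.f n).2 ≤ c.2 + t * C.v.2 then -1 else 0)
  else 0

/-- signed multiplicity of the (orbit of the) top edge of cell `c` in the curve -/
def me (c : ℤ × ℤ) (n : ℤ) : ℤ :=
  if C.d n = (1,0) then
    (if ∃ t, (C.f n).1 = c.1 + t * C.v.1 ∧ (C.f n).2 = c.2 + t * C.v.2 + 1 then 1 else 0)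
  else if C.d n = (-1,0) then
    (if ∃ t, (C.f n).1 - 1 = c.1 + t * C.v.1 ∧ (C.f n).2 = c.2 + t * C.v.2 + 1 then -1 else 0)
  else 0

/-- signed multiplicity of the (orbit of the) east edge of cell `c` in the curve -/
def mn (c : ℤ × ℤ) (n : ℤ) : ℤ :=
  if C.d n = (0,1) then
    (if ∃ t, (C.f n).1 = c.1 + 1 + t * C.v.1 ∧ (C.f n).2 = c.2 + t * C.v.2 then -1 else 0)
  else if C.d n = (0,-1) then
    (if ∃ t, (C.f n).1 = c.1 + 1 + t * C.v.1 ∧ (C.f n).2 = c.2 + t * C.v.2 + 1 then 1 else 0)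
  else 0

def hpot (c z : ℤ × ℤ) : ℤ :=
  if ∃ t, z.1 = c.1 + 1 + t * C.v.1 ∧ z.2 ≤ c.2 + t * C.v.2 then 1 else 0

def W (c : ℤ × ℤ) : ℤ := ∑ n ∈ Finset.Ico (0:ℤ) C.N, C.crv c n
def ME (c : ℤ × ℤ) : ℤ := ∑ n ∈ Finset.Ico (0:ℤ) C.N, C.me c n
def MN (c : ℤ × ℤ) : ℤ := ∑ n ∈ Finset.Ico (0:ℤ) C.N, C.mn c n

lemma crv_per (c : ℤ × ℤ) (n : ℤ) : C.crv c (n + C.N) = C.crv c n := by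
  have hd : C.d (n + C.N) = C.d n := by
    have := C.d_per 1 n; simpa using this
  have hf : C.f (n + C.N) = C.f n + C.k • C.v := C.hB n
  rcases C.dir_cases n with h|h|h|h <;>
    simp only [crv, hd, h, hf, smul_pair, Prod.fst_add, Prod.snd_add, Prod.mk.injEq] <;>
    norm_num <;>
    [skip; skip] <;>
  · apply if_congr _ rfl rfl
    constructor <;> rintro ⟨t, h1, h2⟩
    · refine ⟨t - C.k, by linear_combination h1, ?_⟩
      have e : c.2 + (t - C.k)*C.v.2 = (c.2 + t*C.v.2) - C.k * C.v.2 := by ring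
      rw [e]; linarith
    · refine ⟨t + C.k, by linear_combination h1, ?_⟩
      have e : c.2 + (t + C.k)*C.v.2 = (c.2 + t*C.v.2) + C.k * C.v.2 := by ring
      rw [e]; linarith


lemma me_per (c : ℤ × ℤ) (n : ℤ) : C.me c (n + C.N) = C.me c n := by
  have hd : C.d (n + C.N) = C.d n := by
    have := C.d_per 1 n; simpa using this
  have hf : C.f (n + C.N) = C.f n + C.k • C.v := C.hB n
  rcases C.dir_cases n with h|h|h|h <;>
    simp only [me, hd, h, hf, smul_pair, Prod.fst_add, Prod.snd_add, Prod.mk.injEq] <;>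
    norm_num <;>
    [skip; skip] <;>
  · apply if_congr _ rfl rfl
    constructor <;> rintro ⟨t, h1, h2⟩
    · exact ⟨t - C.k, by linear_combination h1, by linear_combination h2⟩
    · exact ⟨t + C.k, by linear_combination h1, by linear_combination h2⟩

lemma mn_per (c : ℤ × ℤ) (n : ℤ) : C.mn c (n + C.N) = C.mn c n := by
  have hd : C.d (n + C.N) = C.d n := by
    have := C.d_per 1 n; simpa using this
  have hf : C.f (n + C.N) = C.f n + C.k • C.v := C.hB n
  rcases C.dir_cases n with h|h|h|h <;>
    simp only [mn, hd, h, hf, smul_pair, Prod.fst_add, Prod.snd_add, Prod.mk.injEq] <;>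
    norm_num <;>
    [skip; skip] <;>
  · apply if_congr _ rfl rfl
    constructor <;> rintro ⟨t, h1, h2⟩
    · exact ⟨t - C.k, by linear_combination h1, by linear_combination h2⟩
    · exact ⟨t + C.k, by linear_combination h1, by linear_combination h2⟩

/-- Sums of `N`-periodic functions over windows of length `N` are window-independent. -/
lemma sum_window {g : ℤ → ℤ} (hg : ∀ n, g (n + C.N) = g n) (a : ℤ) :
    ∑ n ∈ Finset.Ico a (a + C.N), g n = ∑ n ∈ Finset.Ico (0:ℤ) C.N, g n := by
  have key : ∀ b : ℤ, ∑ n ∈ Finset.Ico b (b + C.N), g n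
      = ∑ n ∈ Finset.Ico (b+1) (b + C.N + 1), g n := by
    intro b
    have hN := C.hN
    have e1 : ∑ n ∈ Finset.Ico (b+1) (b + C.N + 1), g n
        = ∑ n ∈ Finset.Ico (b+1) (b+C.N), g n + g (b + C.N) :=
      ico_top (b+1) (b+C.N) (by omega) g
    have e2 : ∑ n ∈ Finset.Ico b (b + C.N), g n
        = g b + ∑ n ∈ Finset.Ico (b+1) (b+C.N), g n := by
      have h3 := ico_bot b (b + C.N - 1) (by omega) g
      rw [show b + C.N - 1 + 1 = b + C.N by ring] at h3
      exact h3
    rw [e1, e2, hg b]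
    ring
  have main : ∀ b : ℤ, ∑ n ∈ Finset.Ico b (b + C.N), g n
      = ∑ n ∈ Finset.Ico (0:ℤ) C.N, g n := by
    intro b
    induction b using Int.induction_on with
    | zero => simp
    | succ i ih =>
        rw [show ((i:ℤ)+1) + C.N = (i:ℤ) + C.N + 1 by ring, ← key (i:ℤ)]
        exact ih
    | pred i ih =>
        rw [key (-(i:ℤ)-1)]
        rw [show (-(i:ℤ)-1) + 1 = -(i:ℤ) by ring,
            show (-(i:ℤ)-1) + C.N + 1 = -(i:ℤ) + C.N by ring]
        exact ih
  exact main a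

lemma W_window (c : ℤ × ℤ) (a : ℤ) :
    C.W c = ∑ n ∈ Finset.Ico a (a + C.N), C.crv c n := (C.sum_window (C.crv_per c) a).symm

lemma ME_window (c : ℤ × ℤ) (a : ℤ) :
    C.ME c = ∑ n ∈ Finset.Ico a (a + C.N), C.me c n := (C.sum_window (C.me_per c) a).symm

lemma MN_window (c : ℤ × ℤ) (a : ℤ) :
    C.MN c = ∑ n ∈ Finset.Ico a (a + C.N), C.mn c n := (C.sum_window (C.mn_per c) a).symm

/-- vertical jump rule -/
lemma crv_J2 (c : ℤ × ℤ) (n : ℤ) : C.crv (c + (0,1)) n = C.crv c n + C.me c n := by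
  rcases C.dir_cases n with h|h|h|h <;>
    simp only [crv, me, h, Prod.fst_add, Prod.snd_add, Prod.mk.injEq] <;> norm_num
  · by_cases hx : ∃ t, (C.f n).1 = c.1 + t * C.v.1
    · obtain ⟨t0, ht0⟩ := hx
      rw [ite_ex C.hv1 ht0, ite_ex C.hv1 ht0, ite_ex C.hv1 ht0]
      have e : c.2 + 1 + t0 * C.v.2 = c.2 + t0 * C.v.2 + 1 := by ring
      rw [e]
      generalize (c.2 + t0 * C.v.2) = Y
      split_ifs <;> omega
    · rw [if_neg, if_neg, if_neg] <;> simp <;> intro t h1 <;> exact (hx ⟨t, h1⟩).elim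
  · by_cases hx : ∃ t, (C.f n).1 - 1 = c.1 + t * C.v.1
    · obtain ⟨t0, ht0⟩ := hx
      rw [ite_ex C.hv1 ht0, ite_ex C.hv1 ht0, ite_ex C.hv1 ht0]
      have e : c.2 + 1 + t0 * C.v.2 = c.2 + t0 * C.v.2 + 1 := by ring
      rw [e]
      generalize (c.2 + t0 * C.v.2) = Y
      split_ifs <;> omega
    · rw [if_neg, if_neg, if_neg] <;> simp <;> intro t h1 <;> exact (hx ⟨t, h1⟩).elim

lemma J2 (c : ℤ × ℤ) : C.W (c + (0,1)) = C.W c + C.ME c := by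
  simp only [W, ME, ← Finset.sum_add_distrib]
  exact Finset.sum_congr rfl fun n _ => C.crv_J2 c n

/-- horizontal jump rule, pointwise -/
lemma crv_J1 (c : ℤ × ℤ) (n : ℤ) :
    C.crv (c + (1,0)) n
      = C.crv c n + (C.hpot c (C.f n) - C.hpot c (C.f (n+1))) + C.mn c n := by
  have hstep : C.f (n+1) = C.f n + C.d n := C.f_step n
  rcases C.dir_cases n with h|h|h|h <;>
    rw [hstep, h] <;>
    simp only [crv, mn, hpot, h, Prod.fst_add, Prod.snd_add, Prod.mk.injEq] <;> norm_num
  · -- E step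
    have hB : (∃ t, (C.f n).1 + 1 = c.1 + 1 + t * C.v.1 ∧ (C.f n).2 ≤ c.2 + t * C.v.2)
        ↔ (∃ t, (C.f n).1 = c.1 + t * C.v.1 ∧ (C.f n).2 ≤ c.2 + t * C.v.2) :=
      exists_congr fun t => and_congr_left' (by constructor <;> intro h' <;> linarith)
    rw [if_congr hB rfl rfl]
    ring
  · -- N step
    by_cases hx : ∃ t, (C.f n).1 = c.1 + 1 + t * C.v.1
    · obtain ⟨t0, ht0⟩ := hx
      rw [ite_ex C.hv1 ht0, ite_ex C.hv1 ht0, ite_ex C.hv1 ht0]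
      generalize (c.2 + t0 * C.v.2) = Y
      split_ifs <;> omega
    · rw [if_neg, if_neg, if_neg] <;> simp <;> intro t h1 <;> exact (hx ⟨t, h1⟩).elim
  · -- S step
    by_cases hx : ∃ t, (C.f n).1 = c.1 + 1 + t * C.v.1
    · obtain ⟨t0, ht0⟩ := hx
      rw [ite_ex C.hv1 ht0, ite_ex C.hv1 ht0, ite_ex C.hv1 ht0]
      have e : c.2 + t0 * C.v.2 + 1 = c.2 + (t0 * C.v.2 + 1) := by ring
      generalize (c.2 + t0 * C.v.2) = Y
      split_ifs <;> omega
    · rw [if_neg, if_neg, if_neg] <;> simp <;> intro t h1 <;> exact (hx ⟨t, h1⟩).elim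
  · -- W step
    have hB : (∃ t, (C.f n).1 - 1 = c.1 + t * C.v.1 ∧ (C.f n).2 ≤ c.2 + t * C.v.2)
        ↔ (∃ t, (C.f n).1 = c.1 + 1 + t * C.v.1 ∧ (C.f n).2 ≤ c.2 + t * C.v.2) :=
      exists_congr fun t => and_congr_left' (by constructor <;> intro h' <;> linarith)
    rw [if_congr hB rfl rfl]
    have hB2 : (∃ t, (C.f n).1 - 1 = c.1 + 1 + t * C.v.1 ∧ (C.f n).2 ≤ c.2 + t * C.v.2)
        ↔ (∃ t, (C.f n).1 + -1 = c.1 + 1 + t * C.v.1 ∧ (C.f n).2 ≤ c.2 + t * C.v.2) :=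
      exists_congr fun t => and_congr_left' (by constructor <;> intro h' <;> linarith)
    rw [if_congr hB2 rfl rfl]
    split_ifs <;> omega


lemma f_N : C.f C.N = C.f 0 + C.k • C.v := by
  have := C.hB 0; simpa using this

lemma hpot_per (c z : ℤ × ℤ) : C.hpot c (z + C.k • C.v) = C.hpot c z := by
  simp only [hpot, smul_pair, Prod.fst_add, Prod.snd_add]
  apply if_congr _ rfl rfl
  constructor <;> rintro ⟨t, h1, h2⟩
  · refine ⟨t - C.k, by linear_combination h1, ?_⟩
    have e : c.2 + (t - C.k) * C.v.2 = (c.2 + t * C.v.2) - C.k * C.v.2 := by ring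
    rw [e]; linarith
  · refine ⟨t + C.k, by linear_combination h1, ?_⟩
    have e : c.2 + (t + C.k) * C.v.2 = (c.2 + t * C.v.2) + C.k * C.v.2 := by ring
    rw [e]; linarith

lemma J1 (c : ℤ × ℤ) : C.W (c + (1,0)) = C.W c + C.MN c := by
  have h1 : ∀ n ∈ Finset.Ico (0:ℤ) C.N, C.crv (c+(1,0)) n
      = (C.crv c n + C.mn c n) +
        ((fun x => -C.hpot c (C.f x)) (n+1) - (fun x => -C.hpot c (C.f x)) n) := by
    intro n _
    have := C.crv_J1 c n
    simp only []
    linarith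
  have hN := C.hN
  rw [W, Finset.sum_congr rfl h1, Finset.sum_add_distrib, Finset.sum_add_distrib,
    tele (fun x => -C.hpot c (C.f x)) 0 C.N (by omega)]
  have h2 : C.hpot c (C.f C.N) = C.hpot c (C.f 0) := by
    rw [C.f_N, C.hpot_per]
  simp only [h2]
  rw [W, MN]
  ring

lemma crv_shift_v (c : ℤ × ℤ) (n : ℤ) : C.crv (c + C.v) n = C.crv c n := by
  rcases C.dir_cases n with h|h|h|h <;>
    simp only [crv, h, Prod.fst_add, Prod.snd_add, Prod.mk.injEq] <;>
    norm_num <;>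
    [skip; skip] <;>
  · apply if_congr _ rfl rfl
    constructor <;> rintro ⟨t, h1, h2⟩
    · refine ⟨t + 1, by linear_combination h1, ?_⟩
      have e : c.2 + (t + 1) * C.v.2 = c.2 + C.v.2 + t * C.v.2 := by ring
      rw [e]; exact h2
    · refine ⟨t - 1, by linear_combination h1, ?_⟩
      have e : c.2 + C.v.2 + (t - 1) * C.v.2 = c.2 + t * C.v.2 := by ring
      rw [e]; exact h2

lemma W_v (c : ℤ × ℤ) : C.W (c + C.v) = C.W c :=
  Finset.sum_congr rfl fun n _ => C.crv_shift_v c n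

lemma W_tv (c : ℤ × ℤ) : ∀ t : ℤ, C.W (c + t • C.v) = C.W c := by
  have key : ∀ (p : ℤ × ℤ) (i : ℤ), p + (i+1) • C.v = (p + i • C.v) + C.v := by
    intro p i; rw [add_smul, one_smul]; abel
  intro t
  induction t using Int.induction_on with
  | zero => simp
  | succ i ih => rw [key, C.W_v, ih]
  | pred i ih =>
      have e : c + (-(i:ℤ)) • C.v = (c + (-(i:ℤ)-1) • C.v) + C.v := by
        rw [show (-(i:ℤ)) • C.v = (-(i:ℤ)-1) • C.v + (1:ℤ) • C.v by rw [← add_smul]; congr 1; ring]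
        rw [one_smul]; abel
      rw [e, C.W_v] at ih
      exact ih

lemma W_tv' (c : ℤ × ℤ) (t : ℤ) : C.W (c + t • C.v) = C.W c := C.W_tv c t


/-! ## Far fields -/

def M : ℤ := |C.v.1|

lemma hM : 0 < C.M := abs_pos.2 C.hv1

def bndLo (n : ℤ) : ℤ :=
  min ((C.f n).2 - ((C.f n).1 / C.v.1) * C.v.2) ((C.f n).2 - (((C.f n).1 - 1) / C.v.1) * C.v.2)

def bndHi (n : ℤ) : ℤ :=
  max ((C.f n).2 - ((C.f n).1 / C.v.1) * C.v.2) ((C.f n).2 - (((C.f n).1 - 1) / C.v.1) * C.v.2)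

lemma icoNe : (Finset.Ico (0:ℤ) C.N).Nonempty := ⟨0, by simp; exact C.hN⟩

def Yb : ℤ := (Finset.Ico (0:ℤ) C.N).inf' C.icoNe C.bndLo - 1
def Yt : ℤ := (Finset.Ico (0:ℤ) C.N).sup' C.icoNe C.bndHi + 1

lemma far_bottom (y : ℤ) (hy : y ≤ C.Yb) : C.W ((0:ℤ), y) = 0 := by
  rw [W]; apply Finset.sum_eq_zero; intro n hn
  have hBn : C.Yb + 1 ≤ C.bndLo n := by
    have h0 : (Finset.Ico (0:ℤ) C.N).inf' C.icoNe C.bndLo ≤ C.bndLo n :=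
      Finset.inf'_le _ hn
    simp only [Yb]; omega
  rcases C.dir_cases n with h|h|h|h <;> simp only [crv, h, Prod.mk.injEq] <;> norm_num
  · intro t h1
    have ht : (C.f n).1 / C.v.1 = t := by rw [h1, Int.mul_ediv_cancel _ C.hv1]
    have hb : C.bndLo n ≤ (C.f n).2 - t * C.v.2 := by
      rw [bndLo, ht]; exact min_le_left _ _
    omega
  · intro t h1
    have ht : ((C.f n).1 - 1) / C.v.1 = t := by rw [h1, Int.mul_ediv_cancel _ C.hv1]
    have hb : C.bndLo n ≤ (C.f n).2 - t * C.v.2 := by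
      rw [bndLo, ht]; exact min_le_right _ _
    omega

def sg : ℤ := if 0 < C.v.1 then 1 else -1

lemma v1_eq : C.v.1 = C.sg * C.M := by
  by_cases h : 0 < C.v.1
  · simp [sg, h, M, abs_of_pos h]
  · have h2 : C.v.1 < 0 := by have := C.hv1; omega
    simp [sg, h, M, abs_of_neg h2]

def eps : ℤ := C.k * C.sg

lemma eps_abs : 2 ≤ |C.eps| := by
  have h1 : C.sg = 1 ∨ C.sg = -1 := by unfold sg; split_ifs <;> simp
  have := C.hk
  rcases h1 with h|h <;> simp [eps, h] <;> omega

def G (z : ℤ × ℤ) : ℤ := (z.1 - 1) / C.M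

lemma far_top (y : ℤ) (hy : C.Yt ≤ y) : C.W ((0:ℤ), y) = C.eps := by
  have hM := C.hM
  have key : ∀ n ∈ Finset.Ico (0:ℤ) C.N,
      C.crv ((0:ℤ), y) n
        = (fun x => C.G (C.f x)) (n+1) - (fun x => C.G (C.f x)) n := by
    intro n hn
    have hBn : C.bndHi n ≤ C.Yt - 1 := by
      have h0 : C.bndHi n ≤ (Finset.Ico (0:ℤ) C.N).sup' C.icoNe C.bndHi :=
        Finset.le_sup' _ hn
      simp only [Yt]; omega
    have hstep : C.f (n+1) = C.f n + C.d n := C.f_step n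
    show C.crv ((0:ℤ), y) n = C.G (C.f (n+1)) - C.G (C.f n)
    rcases C.dir_cases n with h|h|h|h <;>
      rw [hstep, h] <;>
      simp only [crv, G, h, Prod.fst_add, Prod.snd_add, Prod.mk.injEq] <;> norm_num
    · -- E
      have hdd : (∃ t, (C.f n).1 = t * C.v.1 ∧ (C.f n).2 ≤ y + t * C.v.2) ↔ C.M ∣ (C.f n).1 := by
        constructor
        · rintro ⟨t, h1, -⟩
          exact (abs_dvd _ _).2 ⟨t, by linarith [h1, mul_comm t C.v.1]⟩
        · intro hd
          obtain ⟨t, ht⟩ := (abs_dvd C.v.1 _).1 hd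
          refine ⟨t, by rw [ht]; ring, ?_⟩
          have hediv : (C.f n).1 / C.v.1 = t := by rw [ht, mul_comm, Int.mul_ediv_cancel _ C.hv1]
          have hb : (C.f n).2 - t * C.v.2 ≤ C.bndHi n := by
            rw [← hediv]; exact le_max_left _ _
          omega
      rw [if_congr hdd rfl rfl]
      have := div_jump C.M (C.f n).1 hM
      split_ifs at this ⊢ <;> omega
    · -- W
      have hdd : (∃ t, (C.f n).1 - 1 = t * C.v.1 ∧ (C.f n).2 ≤ y + t * C.v.2)
          ↔ C.M ∣ ((C.f n).1 - 1) := by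
        constructor
        · rintro ⟨t, h1, -⟩
          exact (abs_dvd _ _).2 ⟨t, by linarith [h1, mul_comm t C.v.1]⟩
        · intro hd
          obtain ⟨t, ht⟩ := (abs_dvd C.v.1 _).1 hd
          refine ⟨t, by rw [ht]; ring, ?_⟩
          have hediv : ((C.f n).1 - 1) / C.v.1 = t := by rw [ht, mul_comm, Int.mul_ediv_cancel _ C.hv1]
          have hb : (C.f n).2 - t * C.v.2 ≤ C.bndHi n := by
            rw [← hediv]; exact le_max_right _ _
          omega
      rw [if_congr hdd rfl rfl]
      have := div_jump C.M ((C.f n).1 - 1) hM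
      rw [show (C.f n).1 + -1 - 1 = (C.f n).1 - 1 - 1 by ring]
      split_ifs at this ⊢ <;> omega
  have hN := C.hN
  rw [W, Finset.sum_congr rfl key, tele (fun x => C.G (C.f x)) 0 C.N (by omega)]
  have e1 : C.G (C.f C.N) = C.G (C.f 0) + C.eps := by
    rw [C.f_N]
    have e2 : C.G (C.f 0 + C.k • C.v) = ((C.f 0).1 - 1 + C.eps * C.M) / C.M := by
      simp only [G, smul_pair, Prod.fst_add]
      congr 1
      rw [C.v1_eq, eps]
      ring
    rw [e2, Int.add_mul_ediv_right _ _ (by have := C.hM; omega)]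
    rfl
  rw [e1]
  ring


/-! ## Edge multiplicities around a vertex -/

lemma qN_window {q Nv x : ℤ} (hN : 2 ≤ Nv) (hx : x = q * Nv) (h1 : -Nv < x) (h2 : x < Nv) :
    x = 0 := by
  rcases lt_trichotomy q 0 with h|h|h
  · nlinarith
  · rw [h, zero_mul] at hx; omega
  · nlinarith

lemma mk_pt {a b t : ℤ} (h1 : (C.f a).1 = (C.f b).1 + t * C.v.1)
    (h2 : (C.f a).2 = (C.f b).2 + t * C.v.2) : ∃ q, a = b + q * C.N ∧ t = q * C.k := by
  have h : C.f a = C.f b + t • C.v := by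
    apply Prod.ext <;> simp [smul_pair, h1, h2]
  obtain ⟨q, hq1, hq2⟩ := C.hCpt h
  exact ⟨q, by omega, hq2⟩

lemma ico_split2 (a b : ℤ) (h : a + 2 ≤ b) (f : ℤ → ℤ) :
    ∑ n ∈ Finset.Ico a b, f n = f a + f (a+1) + ∑ n ∈ Finset.Ico (a+2) b, f n := by
  have h1 : Finset.Ico a b = insert a (insert (a+1) (Finset.Ico (a+2) b)) := by
    ext x; simp [Finset.mem_Ico, Finset.mem_insert]; omega
  rw [h1, Finset.sum_insert (by simp [Finset.mem_Ico]; try omega),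
    Finset.sum_insert (by simp [Finset.mem_Ico]; try omega)]
  ring

/-! interface lemmas for evaluating `me` and `mn` -/

lemma me_zero {c : ℤ × ℤ} {n : ℤ}
    (hE : ∀ t, (C.f n).1 = c.1 + t * C.v.1 → (C.f n).2 = c.2 + t * C.v.2 + 1 → False)
    (hW : ∀ t, (C.f n).1 - 1 = c.1 + t * C.v.1 → (C.f n).2 = c.2 + t * C.v.2 + 1 → False) :
    C.me c n = 0 := by
  unfold me
  split_ifs with h1 h2 h3 h4
  · exact absurd h2 (by rintro ⟨t, ha, hb⟩; exact hE t ha hb)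
  · rfl
  · exact absurd h4 (by rintro ⟨t, ha, hb⟩; exact hW t ha hb)
  · rfl
  · rfl

lemma me_zero_vert {c : ℤ × ℤ} {n : ℤ} (hd : C.d n = (0,1) ∨ C.d n = (0,-1)) :
    C.me c n = 0 := by
  rcases hd with h|h <;> simp [me, h]

lemma me_one {c : ℤ × ℤ} {n : ℤ} (hd : C.d n = (1,0)) (t0 : ℤ)
    (h1 : (C.f n).1 = c.1 + t0 * C.v.1) (h2 : (C.f n).2 = c.2 + t0 * C.v.2 + 1) :
    C.me c n = 1 := by
  unfold me
  rw [if_pos hd, if_pos ⟨t0, h1, h2⟩]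

lemma me_negone {c : ℤ × ℤ} {n : ℤ} (hd : C.d n = (-1,0)) (t0 : ℤ)
    (h1 : (C.f n).1 - 1 = c.1 + t0 * C.v.1) (h2 : (C.f n).2 = c.2 + t0 * C.v.2 + 1) :
    C.me c n = -1 := by
  unfold me
  rw [if_neg (by simp [hd]), if_pos hd, if_pos ⟨t0, h1, h2⟩]

lemma mn_zero {c : ℤ × ℤ} {n : ℤ}
    (hN : ∀ t, (C.f n).1 = c.1 + 1 + t * C.v.1 → (C.f n).2 = c.2 + t * C.v.2 → False)
    (hS : ∀ t, (C.f n).1 = c.1 + 1 + t * C.v.1 → (C.f n).2 = c.2 + t * C.v.2 + 1 → False) :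
    C.mn c n = 0 := by
  unfold mn
  split_ifs with h1 h2 h3 h4
  · exact absurd h2 (by rintro ⟨t, ha, hb⟩; exact hN t ha hb)
  · rfl
  · exact absurd h4 (by rintro ⟨t, ha, hb⟩; exact hS t ha hb)
  · rfl
  · rfl

lemma mn_zero_horiz {c : ℤ × ℤ} {n : ℤ} (hd : C.d n = (1,0) ∨ C.d n = (-1,0)) :
    C.mn c n = 0 := by
  rcases hd with h|h <;> simp [mn, h]

lemma mn_negone {c : ℤ × ℤ} {n : ℤ} (hd : C.d n = (0,1)) (t0 : ℤ)
    (h1 : (C.f n).1 = c.1 + 1 + t0 * C.v.1) (h2 : (C.f n).2 = c.2 + t0 * C.v.2) :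
    C.mn c n = -1 := by
  unfold mn
  rw [if_pos hd, if_pos ⟨t0, h1, h2⟩]

lemma mn_one {c : ℤ × ℤ} {n : ℤ} (hd : C.d n = (0,-1)) (t0 : ℤ)
    (h1 : (C.f n).1 = c.1 + 1 + t0 * C.v.1) (h2 : (C.f n).2 = c.2 + t0 * C.v.2 + 1) :
    C.mn c n = 1 := by
  unfold mn
  rw [if_neg (by simp [hd]), if_pos hd, if_pos ⟨t0, h1, h2⟩]


lemma me_zero_E {c : ℤ × ℤ} {n : ℤ} (hd : C.d n = (1,0))
    (hE : ∀ t, (C.f n).1 = c.1 + t * C.v.1 → (C.f n).2 = c.2 + t * C.v.2 + 1 → False) :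
    C.me c n = 0 := by
  unfold me
  rw [if_pos hd, if_neg (by rintro ⟨t, ha, hb⟩; exact hE t ha hb)]

lemma me_zero_W {c : ℤ × ℤ} {n : ℤ} (hd : C.d n = (-1,0))
    (hW : ∀ t, (C.f n).1 - 1 = c.1 + t * C.v.1 → (C.f n).2 = c.2 + t * C.v.2 + 1 → False) :
    C.me c n = 0 := by
  unfold me
  rw [if_neg (by simp [hd]), if_pos hd, if_neg (by rintro ⟨t, ha, hb⟩; exact hW t ha hb)]

lemma mn_zero_N {c : ℤ × ℤ} {n : ℤ} (hd : C.d n = (0,1))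
    (hN : ∀ t, (C.f n).1 = c.1 + 1 + t * C.v.1 → (C.f n).2 = c.2 + t * C.v.2 → False) :
    C.mn c n = 0 := by
  unfold mn
  rw [if_pos hd, if_neg (by rintro ⟨t, ha, hb⟩; exact hN t ha hb)]

lemma mn_zero_S {c : ℤ × ℤ} {n : ℤ} (hd : C.d n = (0,-1))
    (hS : ∀ t, (C.f n).1 = c.1 + 1 + t * C.v.1 → (C.f n).2 = c.2 + t * C.v.2 + 1 → False) :
    C.mn c n = 0 := by
  unfold mn
  rw [if_neg (by simp [hd]), if_pos hd, if_neg (by rintro ⟨t, ha, hb⟩; exact hS t ha hb)]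

lemma f_step' (n₀ : ℤ) : C.f n₀ = C.f (n₀ - 1) + C.d (n₀ - 1) := by
  have := C.f_step (n₀-1); rw [show n₀ - 1 + 1 = n₀ by ring] at this; exact this

lemma ME_east (n₀ : ℤ) :
    C.ME ((C.f n₀).1, (C.f n₀).2 - 1)
      = (if C.d n₀ = (1,0) then 1 else 0) + (if C.d (n₀-1) = (-1,0) then -1 else 0) := by
  have hN2 := C.N2
  set c : ℤ × ℤ := ((C.f n₀).1, (C.f n₀).2 - 1) with hcdef
  have hc1 : c.1 = (C.f n₀).1 := rfl
  have hc2 : c.2 = (C.f n₀).2 - 1 := rfl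
  have hstep := C.f_step' n₀
  rw [ME_window C c (n₀ - 1), ico_split2 (n₀-1) (n₀-1+C.N) (by omega) _,
    show n₀ - 1 + 1 = n₀ by ring, show n₀ - 1 + 2 = n₀ + 1 by ring]
  have hrest : ∑ n ∈ Finset.Ico (n₀+1) (n₀-1+C.N), C.me c n = 0 := by
    apply Finset.sum_eq_zero
    intro n hn
    simp only [Finset.mem_Ico] at hn
    rcases C.dir_cases n with h|h|h|h
    · apply C.me_zero_E h
      intro t h1 h2
      obtain ⟨q, hq1, hq2⟩ := C.mk_pt (a := n) (b := n₀) (t := t) (by omega) (by omega)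
      have h0 := qN_window hN2 (q := q) (x := n - n₀) (by omega) (by omega) (by omega)
      omega
    · exact C.me_zero_vert (Or.inl h)
    · exact C.me_zero_vert (Or.inr h)
    · apply C.me_zero_W h
      intro t h1 h2
      have hstepn : C.f (n+1) = C.f n + (-1, 0) := by rw [C.f_step n, h]
      have e1 : (C.f (n+1)).1 = (C.f n).1 - 1 := by rw [hstepn]; simp; try omega
      have e2 : (C.f (n+1)).2 = (C.f n).2 := by rw [hstepn]; simp
      obtain ⟨q, hq1, hq2⟩ := C.mk_pt (a := n+1) (b := n₀) (t := t) (by omega) (by omega)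
      have h0 := qN_window hN2 (q := q) (x := n + 1 - n₀) (by omega) (by omega) (by omega)
      omega
  have hterm0 : C.me c n₀ = (if C.d n₀ = (1,0) then 1 else 0) := by
    rcases C.dir_cases n₀ with h|h|h|h
    · rw [if_pos h]
      exact C.me_one h 0 (by omega) (by omega)
    · rw [if_neg (by simp [h])]; exact C.me_zero_vert (Or.inl h)
    · rw [if_neg (by simp [h])]; exact C.me_zero_vert (Or.inr h)
    · rw [if_neg (by simp [h])]
      apply C.me_zero_W h
      intro t h1 h2
      have hstepn : C.f (n₀+1) = C.f n₀ + (-1, 0) := by rw [C.f_step n₀, h]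
      have e1 : (C.f (n₀+1)).1 = (C.f n₀).1 - 1 := by rw [hstepn]; simp; try omega
      have e2 : (C.f (n₀+1)).2 = (C.f n₀).2 := by rw [hstepn]; simp
      obtain ⟨q, hq1, hq2⟩ := C.mk_pt (a := n₀+1) (b := n₀) (t := t) (by omega) (by omega)
      have h0 := qN_window hN2 (q := q) (x := (1:ℤ)) (by omega) (by omega) (by omega)
      omega
  have hterm1 : C.me c (n₀-1) = (if C.d (n₀-1) = (-1,0) then -1 else 0) := by
    rcases C.dir_cases (n₀-1) with h|h|h|h
    · rw [if_neg (by simp [h])]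
      apply C.me_zero_E h
      intro t h1 h2
      obtain ⟨q, hq1, hq2⟩ := C.mk_pt (a := n₀-1) (b := n₀) (t := t) (by omega) (by omega)
      have h0 := qN_window hN2 (q := q) (x := (-1:ℤ)) (by omega) (by omega) (by omega)
      omega
    · rw [if_neg (by simp [h])]; exact C.me_zero_vert (Or.inl h)
    · rw [if_neg (by simp [h])]; exact C.me_zero_vert (Or.inr h)
    · rw [if_pos h]
      have e1 : (C.f n₀).1 = (C.f (n₀-1)).1 - 1 := by rw [hstep, h]; simp; try omega
      have e2 : (C.f n₀).2 = (C.f (n₀-1)).2 := by rw [hstep, h]; simp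
      exact C.me_negone h 0 (by omega) (by omega)
  rw [hrest, hterm0, hterm1]
  ring


lemma ME_west (n₀ : ℤ) :
    C.ME ((C.f n₀).1 - 1, (C.f n₀).2 - 1)
      = (if C.d (n₀-1) = (1,0) then 1 else 0) + (if C.d n₀ = (-1,0) then -1 else 0) := by
  have hN2 := C.N2
  set c : ℤ × ℤ := ((C.f n₀).1 - 1, (C.f n₀).2 - 1) with hcdef
  have hc1 : c.1 = (C.f n₀).1 - 1 := rfl
  have hc2 : c.2 = (C.f n₀).2 - 1 := rfl
  have hstep := C.f_step' n₀
  rw [ME_window C c (n₀ - 1), ico_split2 (n₀-1) (n₀-1+C.N) (by omega) _,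
    show n₀ - 1 + 1 = n₀ by ring, show n₀ - 1 + 2 = n₀ + 1 by ring]
  have hrest : ∑ n ∈ Finset.Ico (n₀+1) (n₀-1+C.N), C.me c n = 0 := by
    apply Finset.sum_eq_zero
    intro n hn
    simp only [Finset.mem_Ico] at hn
    rcases C.dir_cases n with h|h|h|h
    · apply C.me_zero_E h
      intro t h1 h2
      have hstepn : C.f (n+1) = C.f n + (1, 0) := by rw [C.f_step n, h]
      have e1 : (C.f (n+1)).1 = (C.f n).1 + 1 := by rw [hstepn]; simp; try omega
      have e2 : (C.f (n+1)).2 = (C.f n).2 := by rw [hstepn]; simp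
      obtain ⟨q, hq1, hq2⟩ := C.mk_pt (a := n+1) (b := n₀) (t := t) (by omega) (by omega)
      have h0 := qN_window hN2 (q := q) (x := n + 1 - n₀) (by omega) (by omega) (by omega)
      omega
    · exact C.me_zero_vert (Or.inl h)
    · exact C.me_zero_vert (Or.inr h)
    · apply C.me_zero_W h
      intro t h1 h2
      obtain ⟨q, hq1, hq2⟩ := C.mk_pt (a := n) (b := n₀) (t := t) (by omega) (by omega)
      have h0 := qN_window hN2 (q := q) (x := n - n₀) (by omega) (by omega) (by omega)
      omega
  have hterm0 : C.me c n₀ = (if C.d n₀ = (-1,0) then -1 else 0) := by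
    rcases C.dir_cases n₀ with h|h|h|h
    · rw [if_neg (by simp [h])]
      apply C.me_zero_E h
      intro t h1 h2
      have hstepn : C.f (n₀+1) = C.f n₀ + (1, 0) := by rw [C.f_step n₀, h]
      have e1 : (C.f (n₀+1)).1 = (C.f n₀).1 + 1 := by rw [hstepn]; simp; try omega
      have e2 : (C.f (n₀+1)).2 = (C.f n₀).2 := by rw [hstepn]; simp
      obtain ⟨q, hq1, hq2⟩ := C.mk_pt (a := n₀+1) (b := n₀) (t := t) (by omega) (by omega)
      have h0 := qN_window hN2 (q := q) (x := (1:ℤ)) (by omega) (by omega) (by omega)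
      omega
    · rw [if_neg (by simp [h])]; exact C.me_zero_vert (Or.inl h)
    · rw [if_neg (by simp [h])]; exact C.me_zero_vert (Or.inr h)
    · rw [if_pos h]
      exact C.me_negone h 0 (by omega) (by omega)
  have hterm1 : C.me c (n₀-1) = (if C.d (n₀-1) = (1,0) then 1 else 0) := by
    rcases C.dir_cases (n₀-1) with h|h|h|h
    · rw [if_pos h]
      have e1 : (C.f n₀).1 = (C.f (n₀-1)).1 + 1 := by rw [hstep, h]; simp; try omega
      have e2 : (C.f n₀).2 = (C.f (n₀-1)).2 := by rw [hstep, h]; simp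
      exact C.me_one h 0 (by omega) (by omega)
    · rw [if_neg (by simp [h])]; exact C.me_zero_vert (Or.inl h)
    · rw [if_neg (by simp [h])]; exact C.me_zero_vert (Or.inr h)
    · rw [if_neg (by simp [h])]
      apply C.me_zero_W h
      intro t h1 h2
      obtain ⟨q, hq1, hq2⟩ := C.mk_pt (a := n₀-1) (b := n₀) (t := t) (by omega) (by omega)
      have h0 := qN_window hN2 (q := q) (x := (-1:ℤ)) (by omega) (by omega) (by omega)
      omega
  rw [hrest, hterm0, hterm1]
  ring

lemma MN_north (n₀ : ℤ) :
    C.MN ((C.f n₀).1 - 1, (C.f n₀).2)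
      = (if C.d n₀ = (0,1) then -1 else 0) + (if C.d (n₀-1) = (0,-1) then 1 else 0) := by
  have hN2 := C.N2
  set c : ℤ × ℤ := ((C.f n₀).1 - 1, (C.f n₀).2) with hcdef
  have hc1 : c.1 = (C.f n₀).1 - 1 := rfl
  have hc2 : c.2 = (C.f n₀).2 := rfl
  have hstep := C.f_step' n₀
  rw [MN_window C c (n₀ - 1), ico_split2 (n₀-1) (n₀-1+C.N) (by omega) _,
    show n₀ - 1 + 1 = n₀ by ring, show n₀ - 1 + 2 = n₀ + 1 by ring]
  have hrest : ∑ n ∈ Finset.Ico (n₀+1) (n₀-1+C.N), C.mn c n = 0 := by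
    apply Finset.sum_eq_zero
    intro n hn
    simp only [Finset.mem_Ico] at hn
    rcases C.dir_cases n with h|h|h|h
    · exact C.mn_zero_horiz (Or.inl h)
    · apply C.mn_zero_N h
      intro t h1 h2
      obtain ⟨q, hq1, hq2⟩ := C.mk_pt (a := n) (b := n₀) (t := t) (by omega) (by omega)
      have h0 := qN_window hN2 (q := q) (x := n - n₀) (by omega) (by omega) (by omega)
      omega
    · apply C.mn_zero_S h
      intro t h1 h2
      have hstepn : C.f (n+1) = C.f n + (0, -1) := by rw [C.f_step n, h]
      have e1 : (C.f (n+1)).1 = (C.f n).1 := by rw [hstepn]; simp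
      have e2 : (C.f (n+1)).2 = (C.f n).2 - 1 := by rw [hstepn]; simp; try omega
      obtain ⟨q, hq1, hq2⟩ := C.mk_pt (a := n+1) (b := n₀) (t := t) (by omega) (by omega)
      have h0 := qN_window hN2 (q := q) (x := n + 1 - n₀) (by omega) (by omega) (by omega)
      omega
    · exact C.mn_zero_horiz (Or.inr h)
  have hterm0 : C.mn c n₀ = (if C.d n₀ = (0,1) then -1 else 0) := by
    rcases C.dir_cases n₀ with h|h|h|h
    · rw [if_neg (by simp [h])]; exact C.mn_zero_horiz (Or.inl h)
    · rw [if_pos h]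
      exact C.mn_negone h 0 (by omega) (by omega)
    · rw [if_neg (by simp [h])]
      apply C.mn_zero_S h
      intro t h1 h2
      have hstepn : C.f (n₀+1) = C.f n₀ + (0, -1) := by rw [C.f_step n₀, h]
      have e1 : (C.f (n₀+1)).1 = (C.f n₀).1 := by rw [hstepn]; simp
      have e2 : (C.f (n₀+1)).2 = (C.f n₀).2 - 1 := by rw [hstepn]; simp; try omega
      obtain ⟨q, hq1, hq2⟩ := C.mk_pt (a := n₀+1) (b := n₀) (t := t) (by omega) (by omega)
      have h0 := qN_window hN2 (q := q) (x := (1:ℤ)) (by omega) (by omega) (by omega)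
      omega
    · rw [if_neg (by simp [h])]; exact C.mn_zero_horiz (Or.inr h)
  have hterm1 : C.mn c (n₀-1) = (if C.d (n₀-1) = (0,-1) then 1 else 0) := by
    rcases C.dir_cases (n₀-1) with h|h|h|h
    · rw [if_neg (by simp [h])]; exact C.mn_zero_horiz (Or.inl h)
    · rw [if_neg (by simp [h])]
      apply C.mn_zero_N h
      intro t h1 h2
      obtain ⟨q, hq1, hq2⟩ := C.mk_pt (a := n₀-1) (b := n₀) (t := t) (by omega) (by omega)
      have h0 := qN_window hN2 (q := q) (x := (-1:ℤ)) (by omega) (by omega) (by omega)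
      omega
    · rw [if_pos h]
      have e1 : (C.f n₀).1 = (C.f (n₀-1)).1 := by rw [hstep, h]; simp
      have e2 : (C.f n₀).2 = (C.f (n₀-1)).2 - 1 := by rw [hstep, h]; simp; try omega
      exact C.mn_one h 0 (by omega) (by omega)
    · rw [if_neg (by simp [h])]; exact C.mn_zero_horiz (Or.inr h)
  rw [hrest, hterm0, hterm1]
  ring

lemma MN_south (n₀ : ℤ) :
    C.MN ((C.f n₀).1 - 1, (C.f n₀).2 - 1)
      = (if C.d (n₀-1) = (0,1) then -1 else 0) + (if C.d n₀ = (0,-1) then 1 else 0) := by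
  have hN2 := C.N2
  set c : ℤ × ℤ := ((C.f n₀).1 - 1, (C.f n₀).2 - 1) with hcdef
  have hc1 : c.1 = (C.f n₀).1 - 1 := rfl
  have hc2 : c.2 = (C.f n₀).2 - 1 := rfl
  have hstep := C.f_step' n₀
  rw [MN_window C c (n₀ - 1), ico_split2 (n₀-1) (n₀-1+C.N) (by omega) _,
    show n₀ - 1 + 1 = n₀ by ring, show n₀ - 1 + 2 = n₀ + 1 by ring]
  have hrest : ∑ n ∈ Finset.Ico (n₀+1) (n₀-1+C.N), C.mn c n = 0 := by
    apply Finset.sum_eq_zero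
    intro n hn
    simp only [Finset.mem_Ico] at hn
    rcases C.dir_cases n with h|h|h|h
    · exact C.mn_zero_horiz (Or.inl h)
    · apply C.mn_zero_N h
      intro t h1 h2
      have hstepn : C.f (n+1) = C.f n + (0, 1) := by rw [C.f_step n, h]
      have e1 : (C.f (n+1)).1 = (C.f n).1 := by rw [hstepn]; simp
      have e2 : (C.f (n+1)).2 = (C.f n).2 + 1 := by rw [hstepn]; simp
      obtain ⟨q, hq1, hq2⟩ := C.mk_pt (a := n+1) (b := n₀) (t := t) (by omega) (by omega)
      have h0 := qN_window hN2 (q := q) (x := n + 1 - n₀) (by omega) (by omega) (by omega)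
      omega
    · apply C.mn_zero_S h
      intro t h1 h2
      obtain ⟨q, hq1, hq2⟩ := C.mk_pt (a := n) (b := n₀) (t := t) (by omega) (by omega)
      have h0 := qN_window hN2 (q := q) (x := n - n₀) (by omega) (by omega) (by omega)
      omega
    · exact C.mn_zero_horiz (Or.inr h)
  have hterm0 : C.mn c n₀ = (if C.d n₀ = (0,-1) then 1 else 0) := by
    rcases C.dir_cases n₀ with h|h|h|h
    · rw [if_neg (by simp [h])]; exact C.mn_zero_horiz (Or.inl h)
    · rw [if_neg (by simp [h])]
      apply C.mn_zero_N h
      intro t h1 h2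
      have hstepn : C.f (n₀+1) = C.f n₀ + (0, 1) := by rw [C.f_step n₀, h]
      have e1 : (C.f (n₀+1)).1 = (C.f n₀).1 := by rw [hstepn]; simp
      have e2 : (C.f (n₀+1)).2 = (C.f n₀).2 + 1 := by rw [hstepn]; simp
      obtain ⟨q, hq1, hq2⟩ := C.mk_pt (a := n₀+1) (b := n₀) (t := t) (by omega) (by omega)
      have h0 := qN_window hN2 (q := q) (x := (1:ℤ)) (by omega) (by omega) (by omega)
      omega
    · rw [if_pos h]
      exact C.mn_one h 0 (by omega) (by omega)
    · rw [if_neg (by simp [h])]; exact C.mn_zero_horiz (Or.inr h)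
  have hterm1 : C.mn c (n₀-1) = (if C.d (n₀-1) = (0,1) then -1 else 0) := by
    rcases C.dir_cases (n₀-1) with h|h|h|h
    · rw [if_neg (by simp [h])]; exact C.mn_zero_horiz (Or.inl h)
    · rw [if_pos h]
      have e1 : (C.f n₀).1 = (C.f (n₀-1)).1 := by rw [hstep, h]; simp
      have e2 : (C.f n₀).2 = (C.f (n₀-1)).2 + 1 := by rw [hstep, h]; simp
      exact C.mn_negone h 0 (by omega) (by omega)
    · rw [if_neg (by simp [h])]
      apply C.mn_zero_S h
      intro t h1 h2
      obtain ⟨q, hq1, hq2⟩ := C.mk_pt (a := n₀-1) (b := n₀) (t := t) (by omega) (by omega)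
      have h0 := qN_window hN2 (q := q) (x := (-1:ℤ)) (by omega) (by omega) (by omega)
      omega
    · rw [if_neg (by simp [h])]; exact C.mn_zero_horiz (Or.inr h)
  rw [hrest, hterm0, hterm1]
  ring


/-! ## Left and right cells of a step -/

def lc (n : ℤ) : ℤ × ℤ :=
  if C.d n = (1,0) then ((C.f n).1, (C.f n).2)
  else if C.d n = (0,1) then ((C.f n).1 - 1, (C.f n).2)
  else if C.d n = (0,-1) then ((C.f n).1, (C.f n).2 - 1)
  else ((C.f n).1 - 1, (C.f n).2 - 1)

def rc (n : ℤ) : ℤ × ℤ :=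
  if C.d n = (1,0) then ((C.f n).1, (C.f n).2 - 1)
  else if C.d n = (0,1) then ((C.f n).1, (C.f n).2)
  else if C.d n = (0,-1) then ((C.f n).1 - 1, (C.f n).2 - 1)
  else ((C.f n).1 - 1, (C.f n).2)

lemma lc_E {n : ℤ} (h : C.d n = (1,0)) : C.lc n = ((C.f n).1, (C.f n).2) := by
  unfold lc; rw [if_pos h]
lemma lc_N {n : ℤ} (h : C.d n = (0,1)) : C.lc n = ((C.f n).1 - 1, (C.f n).2) := by
  unfold lc; rw [if_neg (by simp [h]), if_pos h]
lemma lc_S {n : ℤ} (h : C.d n = (0,-1)) : C.lc n = ((C.f n).1, (C.f n).2 - 1) := by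
  unfold lc; rw [if_neg (by simp [h]), if_neg (by simp [h]), if_pos h]
lemma lc_W {n : ℤ} (h : C.d n = (-1,0)) : C.lc n = ((C.f n).1 - 1, (C.f n).2 - 1) := by
  unfold lc; rw [if_neg (by simp [h]), if_neg (by simp [h]), if_neg (by simp [h])]
lemma rc_E {n : ℤ} (h : C.d n = (1,0)) : C.rc n = ((C.f n).1, (C.f n).2 - 1) := by
  unfold rc; rw [if_pos h]
lemma rc_N {n : ℤ} (h : C.d n = (0,1)) : C.rc n = ((C.f n).1, (C.f n).2) := by
  unfold rc; rw [if_neg (by simp [h]), if_pos h]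
lemma rc_S {n : ℤ} (h : C.d n = (0,-1)) : C.rc n = ((C.f n).1 - 1, (C.f n).2 - 1) := by
  unfold rc; rw [if_neg (by simp [h]), if_neg (by simp [h]), if_pos h]
lemma rc_W {n : ℤ} (h : C.d n = (-1,0)) : C.rc n = ((C.f n).1 - 1, (C.f n).2) := by
  unfold rc; rw [if_neg (by simp [h]), if_neg (by simp [h]), if_neg (by simp [h])]

lemma W_up (a b : ℤ) : C.W (a, b+1) = C.W (a, b) + C.ME (a, b) := by
  have h := C.J2 (a, b)
  have e : ((a,b) : ℤ × ℤ) + (0,1) = (a, b+1) := by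
    apply Prod.ext <;> simp
  rwa [e] at h

lemma W_right (a b : ℤ) : C.W (a+1, b) = C.W (a, b) + C.MN (a, b) := by
  have h := C.J1 (a, b)
  have e : ((a,b) : ℤ × ℤ) + (1,0) = (a+1, b) := by
    apply Prod.ext <;> simp
  rwa [e] at h

lemma backtrack {n : ℤ} (h : C.f (n+2) = C.f n) : False := by
  have := C.f_inj h; omega

lemma bt2 {n : ℤ} {w : ℤ × ℤ} (hin : C.d n = w) (hout : C.d (n+1) = -w) : False := by
  apply C.backtrack (n := n)
  have e : C.f (n+2) = C.f n + w + -w := by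
    rw [show n + 2 = (n+1)+1 by ring, C.f_step (n+1), hout, C.f_step n, hin]
  rw [e]; abel

/-- left value = right value + 1 across each step -/
lemma lr (n : ℤ) : C.W (C.lc n) = C.W (C.rc n) + 1 := by
  rcases C.dir_cases n with h|h|h|h
  · -- E
    have hbt : ¬ C.d (n-1) = (-1,0) := by
      intro hW
      exact C.bt2 (n := n - 1) (w := ((-1 : ℤ),(0:ℤ))) hW
        (by rw [show n - 1 + 1 = n by ring]; simpa using h)
    have h1 := C.W_up (C.f n).1 ((C.f n).2 - 1)
    rw [show (C.f n).2 - 1 + 1 = (C.f n).2 by ring] at h1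
    have h2 := C.ME_east n
    rw [if_pos h, if_neg hbt] at h2
    rw [C.lc_E h, C.rc_E h, h1, h2]
    ring
  · -- N
    have hbt : ¬ C.d (n-1) = (0,-1) := by
      intro hS
      exact C.bt2 (n := n - 1) (w := ((0 : ℤ),(-1:ℤ))) hS
        (by rw [show n - 1 + 1 = n by ring]; simpa using h)
    have h1 := C.W_right ((C.f n).1 - 1) (C.f n).2
    rw [show (C.f n).1 - 1 + 1 = (C.f n).1 by ring] at h1
    have h2 := C.MN_north n
    rw [if_pos h, if_neg hbt] at h2
    rw [C.lc_N h, C.rc_N h, h1, h2]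
    ring
  · -- S
    have hbt : ¬ C.d (n-1) = (0,1) := by
      intro hN
      exact C.bt2 (n := n - 1) (w := ((0 : ℤ),(1:ℤ))) hN
        (by rw [show n - 1 + 1 = n by ring]; simpa using h)
    have h1 := C.W_right ((C.f n).1 - 1) ((C.f n).2 - 1)
    rw [show (C.f n).1 - 1 + 1 = (C.f n).1 by ring] at h1
    have h2 := C.MN_south n
    rw [if_pos h, if_neg hbt] at h2
    rw [C.lc_S h, C.rc_S h, h1, h2]
    ring
  · -- W
    have hbt : ¬ C.d (n-1) = (1,0) := by
      intro hE
      exact C.bt2 (n := n - 1) (w := ((1 : ℤ),(0:ℤ))) hE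
        (by rw [show n - 1 + 1 = n by ring]; simpa using h)
    have h1 := C.W_up ((C.f n).1 - 1) ((C.f n).2 - 1)
    rw [show (C.f n).2 - 1 + 1 = (C.f n).2 by ring] at h1
    have h2 := C.ME_west n
    rw [if_pos h, if_neg hbt] at h2
    rw [C.lc_W h, C.rc_W h, h1, h2]
    ring


/-- propagation of the left value along the curve -/
lemma prop (n : ℤ) : C.W (C.lc (n+1)) = C.W (C.lc n) := by
  rcases C.dir_cases n with hin|hin|hin|hin <;>
    rcases C.dir_cases (n+1) with hout|hout|hout|hout
  · have hs : C.f (n+1) = C.f n + (1,0) := by rw [C.f_step n, hin]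
    have e1 : (C.f (n+1)).1 = (C.f n).1 + 1 := by rw [hs]; simp
    have e2 : (C.f (n+1)).2 = (C.f n).2 + 0 := by rw [hs]; simp
    have hlcn : C.lc n = ((C.f (n+1)).1 - 1, (C.f (n+1)).2) := by
      rw [C.lc_E hin]; apply Prod.ext <;> (simp; try omega)
    have hlco : C.lc (n+1) = ((C.f (n+1)).1, (C.f (n+1)).2) := C.lc_E hout
    have hl_N := C.MN_north (n+1)
    rw [show n + 1 - 1 = n by ring, if_neg (by simp [hout]), if_neg (by simp [hin])] at hl_N
    have hm_N := C.W_right ((C.f (n+1)).1 - 1) ((C.f (n+1)).2)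
    rw [show (C.f (n+1)).1 - 1 + 1 = (C.f (n+1)).1 by ring, hl_N] at hm_N
    rw [hlcn, hlco]
    omega
  · have hs : C.f (n+1) = C.f n + (1,0) := by rw [C.f_step n, hin]
    have e1 : (C.f (n+1)).1 = (C.f n).1 + 1 := by rw [hs]; simp
    have e2 : (C.f (n+1)).2 = (C.f n).2 + 0 := by rw [hs]; simp
    have hlcn : C.lc n = ((C.f (n+1)).1 - 1, (C.f (n+1)).2) := by
      rw [C.lc_E hin]; apply Prod.ext <;> (simp; try omega)
    have hlco : C.lc (n+1) = ((C.f (n+1)).1 - 1, (C.f (n+1)).2) := C.lc_N hout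
    rw [hlcn, hlco]

  · have hs : C.f (n+1) = C.f n + (1,0) := by rw [C.f_step n, hin]
    have e1 : (C.f (n+1)).1 = (C.f n).1 + 1 := by rw [hs]; simp
    have e2 : (C.f (n+1)).2 = (C.f n).2 + 0 := by rw [hs]; simp
    have hlcn : C.lc n = ((C.f (n+1)).1 - 1, (C.f (n+1)).2) := by
      rw [C.lc_E hin]; apply Prod.ext <;> (simp; try omega)
    have hlco : C.lc (n+1) = ((C.f (n+1)).1, (C.f (n+1)).2 - 1) := C.lc_S hout
    have hl_N := C.MN_north (n+1)
    rw [show n + 1 - 1 = n by ring, if_neg (by simp [hout]), if_neg (by simp [hin])] at hl_N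
    have hm_N := C.W_right ((C.f (n+1)).1 - 1) ((C.f (n+1)).2)
    rw [show (C.f (n+1)).1 - 1 + 1 = (C.f (n+1)).1 by ring, hl_N] at hm_N
    have hl_E := C.ME_east (n+1)
    rw [show n + 1 - 1 = n by ring, if_neg (by simp [hout]), if_neg (by simp [hin])] at hl_E
    have hm_E := C.W_up ((C.f (n+1)).1) ((C.f (n+1)).2 - 1)
    rw [show (C.f (n+1)).2 - 1 + 1 = (C.f (n+1)).2 by ring, hl_E] at hm_E
    rw [hlcn, hlco]
    omega
  · exact (C.bt2 hin (by rw [hout]; decide)).elim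
  · have hs : C.f (n+1) = C.f n + (0,1) := by rw [C.f_step n, hin]
    have e1 : (C.f (n+1)).1 = (C.f n).1 + 0 := by rw [hs]; simp
    have e2 : (C.f (n+1)).2 = (C.f n).2 + 1 := by rw [hs]; simp
    have hlcn : C.lc n = ((C.f (n+1)).1 - 1, (C.f (n+1)).2 - 1) := by
      rw [C.lc_N hin]; apply Prod.ext <;> (simp; try omega)
    have hlco : C.lc (n+1) = ((C.f (n+1)).1, (C.f (n+1)).2) := C.lc_E hout
    have hl_W := C.ME_west (n+1)
    rw [show n + 1 - 1 = n by ring, if_neg (by simp [hin]), if_neg (by simp [hout])] at hl_W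
    have hm_W := C.W_up ((C.f (n+1)).1 - 1) ((C.f (n+1)).2 - 1)
    rw [show (C.f (n+1)).2 - 1 + 1 = (C.f (n+1)).2 by ring, hl_W] at hm_W
    have hl_N := C.MN_north (n+1)
    rw [show n + 1 - 1 = n by ring, if_neg (by simp [hout]), if_neg (by simp [hin])] at hl_N
    have hm_N := C.W_right ((C.f (n+1)).1 - 1) ((C.f (n+1)).2)
    rw [show (C.f (n+1)).1 - 1 + 1 = (C.f (n+1)).1 by ring, hl_N] at hm_N
    rw [hlcn, hlco]
    omega
  · have hs : C.f (n+1) = C.f n + (0,1) := by rw [C.f_step n, hin]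
    have e1 : (C.f (n+1)).1 = (C.f n).1 + 0 := by rw [hs]; simp
    have e2 : (C.f (n+1)).2 = (C.f n).2 + 1 := by rw [hs]; simp
    have hlcn : C.lc n = ((C.f (n+1)).1 - 1, (C.f (n+1)).2 - 1) := by
      rw [C.lc_N hin]; apply Prod.ext <;> (simp; try omega)
    have hlco : C.lc (n+1) = ((C.f (n+1)).1 - 1, (C.f (n+1)).2) := C.lc_N hout
    have hl_W := C.ME_west (n+1)
    rw [show n + 1 - 1 = n by ring, if_neg (by simp [hin]), if_neg (by simp [hout])] at hl_W
    have hm_W := C.W_up ((C.f (n+1)).1 - 1) ((C.f (n+1)).2 - 1)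
    rw [show (C.f (n+1)).2 - 1 + 1 = (C.f (n+1)).2 by ring, hl_W] at hm_W
    rw [hlcn, hlco]
    omega
  · exact (C.bt2 hin (by rw [hout]; decide)).elim
  · have hs : C.f (n+1) = C.f n + (0,1) := by rw [C.f_step n, hin]
    have e1 : (C.f (n+1)).1 = (C.f n).1 + 0 := by rw [hs]; simp
    have e2 : (C.f (n+1)).2 = (C.f n).2 + 1 := by rw [hs]; simp
    have hlcn : C.lc n = ((C.f (n+1)).1 - 1, (C.f (n+1)).2 - 1) := by
      rw [C.lc_N hin]; apply Prod.ext <;> (simp; try omega)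
    have hlco : C.lc (n+1) = ((C.f (n+1)).1 - 1, (C.f (n+1)).2 - 1) := C.lc_W hout
    rw [hlcn, hlco]

  · have hs : C.f (n+1) = C.f n + (0,-1) := by rw [C.f_step n, hin]
    have e1 : (C.f (n+1)).1 = (C.f n).1 + 0 := by rw [hs]; simp
    have e2 : (C.f (n+1)).2 = (C.f n).2 + -1 := by rw [hs]; simp
    have hlcn : C.lc n = ((C.f (n+1)).1, (C.f (n+1)).2) := by
      rw [C.lc_S hin]; apply Prod.ext <;> (simp; try omega)
    have hlco : C.lc (n+1) = ((C.f (n+1)).1, (C.f (n+1)).2) := C.lc_E hout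
    rw [hlcn, hlco]

  · exact (C.bt2 hin (by rw [hout]; decide)).elim
  · have hs : C.f (n+1) = C.f n + (0,-1) := by rw [C.f_step n, hin]
    have e1 : (C.f (n+1)).1 = (C.f n).1 + 0 := by rw [hs]; simp
    have e2 : (C.f (n+1)).2 = (C.f n).2 + -1 := by rw [hs]; simp
    have hlcn : C.lc n = ((C.f (n+1)).1, (C.f (n+1)).2) := by
      rw [C.lc_S hin]; apply Prod.ext <;> (simp; try omega)
    have hlco : C.lc (n+1) = ((C.f (n+1)).1, (C.f (n+1)).2 - 1) := C.lc_S hout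
    have hl_E := C.ME_east (n+1)
    rw [show n + 1 - 1 = n by ring, if_neg (by simp [hout]), if_neg (by simp [hin])] at hl_E
    have hm_E := C.W_up ((C.f (n+1)).1) ((C.f (n+1)).2 - 1)
    rw [show (C.f (n+1)).2 - 1 + 1 = (C.f (n+1)).2 by ring, hl_E] at hm_E
    rw [hlcn, hlco]
    omega
  · have hs : C.f (n+1) = C.f n + (0,-1) := by rw [C.f_step n, hin]
    have e1 : (C.f (n+1)).1 = (C.f n).1 + 0 := by rw [hs]; simp
    have e2 : (C.f (n+1)).2 = (C.f n).2 + -1 := by rw [hs]; simp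
    have hlcn : C.lc n = ((C.f (n+1)).1, (C.f (n+1)).2) := by
      rw [C.lc_S hin]; apply Prod.ext <;> (simp; try omega)
    have hlco : C.lc (n+1) = ((C.f (n+1)).1 - 1, (C.f (n+1)).2 - 1) := C.lc_W hout
    have hl_E := C.ME_east (n+1)
    rw [show n + 1 - 1 = n by ring, if_neg (by simp [hout]), if_neg (by simp [hin])] at hl_E
    have hm_E := C.W_up ((C.f (n+1)).1) ((C.f (n+1)).2 - 1)
    rw [show (C.f (n+1)).2 - 1 + 1 = (C.f (n+1)).2 by ring, hl_E] at hm_E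
    have hl_S := C.MN_south (n+1)
    rw [show n + 1 - 1 = n by ring, if_neg (by simp [hin]), if_neg (by simp [hout])] at hl_S
    have hm_S := C.W_right ((C.f (n+1)).1 - 1) ((C.f (n+1)).2 - 1)
    rw [show (C.f (n+1)).1 - 1 + 1 = (C.f (n+1)).1 by ring, hl_S] at hm_S
    rw [hlcn, hlco]
    omega
  · exact (C.bt2 hin (by rw [hout]; decide)).elim
  · have hs : C.f (n+1) = C.f n + (-1,0) := by rw [C.f_step n, hin]
    have e1 : (C.f (n+1)).1 = (C.f n).1 + -1 := by rw [hs]; simp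
    have e2 : (C.f (n+1)).2 = (C.f n).2 + 0 := by rw [hs]; simp
    have hlcn : C.lc n = ((C.f (n+1)).1, (C.f (n+1)).2 - 1) := by
      rw [C.lc_W hin]; apply Prod.ext <;> (simp; try omega)
    have hlco : C.lc (n+1) = ((C.f (n+1)).1 - 1, (C.f (n+1)).2) := C.lc_N hout
    have hl_S := C.MN_south (n+1)
    rw [show n + 1 - 1 = n by ring, if_neg (by simp [hin]), if_neg (by simp [hout])] at hl_S
    have hm_S := C.W_right ((C.f (n+1)).1 - 1) ((C.f (n+1)).2 - 1)
    rw [show (C.f (n+1)).1 - 1 + 1 = (C.f (n+1)).1 by ring, hl_S] at hm_S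
    have hl_W := C.ME_west (n+1)
    rw [show n + 1 - 1 = n by ring, if_neg (by simp [hin]), if_neg (by simp [hout])] at hl_W
    have hm_W := C.W_up ((C.f (n+1)).1 - 1) ((C.f (n+1)).2 - 1)
    rw [show (C.f (n+1)).2 - 1 + 1 = (C.f (n+1)).2 by ring, hl_W] at hm_W
    rw [hlcn, hlco]
    omega
  · have hs : C.f (n+1) = C.f n + (-1,0) := by rw [C.f_step n, hin]
    have e1 : (C.f (n+1)).1 = (C.f n).1 + -1 := by rw [hs]; simp
    have e2 : (C.f (n+1)).2 = (C.f n).2 + 0 := by rw [hs]; simp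
    have hlcn : C.lc n = ((C.f (n+1)).1, (C.f (n+1)).2 - 1) := by
      rw [C.lc_W hin]; apply Prod.ext <;> (simp; try omega)
    have hlco : C.lc (n+1) = ((C.f (n+1)).1, (C.f (n+1)).2 - 1) := C.lc_S hout
    rw [hlcn, hlco]

  · have hs : C.f (n+1) = C.f n + (-1,0) := by rw [C.f_step n, hin]
    have e1 : (C.f (n+1)).1 = (C.f n).1 + -1 := by rw [hs]; simp
    have e2 : (C.f (n+1)).2 = (C.f n).2 + 0 := by rw [hs]; simp
    have hlcn : C.lc n = ((C.f (n+1)).1, (C.f (n+1)).2 - 1) := by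
      rw [C.lc_W hin]; apply Prod.ext <;> (simp; try omega)
    have hlco : C.lc (n+1) = ((C.f (n+1)).1 - 1, (C.f (n+1)).2 - 1) := C.lc_W hout
    have hl_S := C.MN_south (n+1)
    rw [show n + 1 - 1 = n by ring, if_neg (by simp [hin]), if_neg (by simp [hout])] at hl_S
    have hm_S := C.W_right ((C.f (n+1)).1 - 1) ((C.f (n+1)).2 - 1)
    rw [show (C.f (n+1)).1 - 1 + 1 = (C.f (n+1)).1 by ring, hl_S] at hm_S
    rw [hlcn, hlco]
    omega


/-! ## The final contradiction -/

def lam : ℤ := C.W (C.lc 0)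

lemma lc_val : ∀ n : ℤ, C.W (C.lc n) = C.lam := by
  intro n
  induction n using Int.induction_on with
  | zero => rfl
  | succ i ih => rw [C.prop i]; exact ih
  | pred i ih =>
      have h := C.prop (-(i:ℤ) - 1)
      rw [show -(i:ℤ) - 1 + 1 = -(i:ℤ) by ring] at h
      rw [← h]
      exact ih

lemma rc_val (n : ℤ) : C.W (C.rc n) = C.lam - 1 := by
  have h1 := C.lr n
  have h2 := C.lc_val n
  omega

lemma jump_value {y : ℤ} (h : C.ME ((0:ℤ), y) ≠ 0) :
    (C.W ((0:ℤ), y) = C.lam - 1 ∨ C.W ((0:ℤ), y) = C.lam) ∧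
    (C.W ((0:ℤ), y+1) = C.lam - 1 ∨ C.W ((0:ℤ), y+1) = C.lam) := by
  obtain ⟨n, hn, hme⟩ := Finset.exists_ne_zero_of_sum_ne_zero h
  rcases C.dir_cases n with hd|hd|hd|hd
  · -- E step
    have hval : C.me ((0:ℤ), y) n
        = if (∃ t, (C.f n).1 = ((0:ℤ),y).1 + t * C.v.1 ∧
            (C.f n).2 = ((0:ℤ),y).2 + t * C.v.2 + 1) then 1 else 0 := by
      unfold me; rw [if_pos hd]
    rw [hval] at hme
    rcases Classical.em (∃ t, (C.f n).1 = ((0:ℤ),y).1 + t * C.v.1 ∧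
        (C.f n).2 = ((0:ℤ),y).2 + t * C.v.2 + 1) with hex | hex
    swap
    · rw [if_neg hex] at hme; exact absurd rfl hme
    obtain ⟨t, h1, h2⟩ := hex
    simp at h1 h2
    have hcell1 : ((0:ℤ), y) + t • C.v = C.rc n := by
      rw [C.rc_E hd]; apply Prod.ext <;> simp [smul_pair] <;> omega
    have hcell2 : ((0:ℤ), y+1) + t • C.v = C.lc n := by
      rw [C.lc_E hd]; apply Prod.ext <;> simp [smul_pair] <;> omega
    have w1 : C.W ((0:ℤ), y) = C.lam - 1 := by
      rw [← C.W_tv ((0:ℤ), y) t, hcell1, C.rc_val n]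
    have w2 : C.W ((0:ℤ), y+1) = C.lam := by
      rw [← C.W_tv ((0:ℤ), y+1) t, hcell2, C.lc_val n]
    exact ⟨Or.inl w1, Or.inr w2⟩
  · exact absurd (C.me_zero_vert (Or.inl hd)) hme
  · exact absurd (C.me_zero_vert (Or.inr hd)) hme
  · -- W step
    have hval : C.me ((0:ℤ), y) n
        = if (∃ t, (C.f n).1 - 1 = ((0:ℤ),y).1 + t * C.v.1 ∧
            (C.f n).2 = ((0:ℤ),y).2 + t * C.v.2 + 1) then -1 else 0 := by
      unfold me; rw [if_neg (by simp [hd]), if_pos hd]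
    rw [hval] at hme
    rcases Classical.em (∃ t, (C.f n).1 - 1 = ((0:ℤ),y).1 + t * C.v.1 ∧
        (C.f n).2 = ((0:ℤ),y).2 + t * C.v.2 + 1) with hex | hex
    swap
    · rw [if_neg hex] at hme; exact absurd rfl hme
    obtain ⟨t, h1, h2⟩ := hex
    simp at h1 h2
    have hcell1 : ((0:ℤ), y) + t • C.v = C.lc n := by
      rw [C.lc_W hd]; apply Prod.ext <;> simp [smul_pair] <;> omega
    have hcell2 : ((0:ℤ), y+1) + t • C.v = C.rc n := by
      rw [C.rc_W hd]; apply Prod.ext <;> simp [smul_pair] <;> omega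
    have w1 : C.W ((0:ℤ), y) = C.lam := by
      rw [← C.W_tv ((0:ℤ), y) t, hcell1, C.lc_val n]
    have w2 : C.W ((0:ℤ), y+1) = C.lam - 1 := by
      rw [← C.W_tv ((0:ℤ), y+1) t, hcell2, C.rc_val n]
    exact ⟨Or.inr w1, Or.inl w2⟩

include C in
theorem absurdity : False := by
  have hbt := C.eps_abs
  set y0 : ℤ := min C.Yb C.Yt with hy0
  set y1 : ℤ := max C.Yb C.Yt with hy1
  have hy01 : y0 ≤ y1 := le_trans (min_le_left _ _) (le_max_left _ _)
  have hfb : C.W ((0:ℤ), y0) = 0 := C.far_bottom y0 (min_le_left _ _)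
  have hft : C.W ((0:ℤ), y1) = C.eps := C.far_top y1 (le_max_right _ _)
  -- upward induction
  have up : ∀ y : ℤ, y0 ≤ y →
      (C.W ((0:ℤ), y) = 0 ∨ C.W ((0:ℤ), y) = C.lam - 1 ∨ C.W ((0:ℤ), y) = C.lam) := by
    refine Int.le_induction ?_ ?_
    · left; exact hfb
    · intro m hm ih
      by_cases hME : C.ME ((0:ℤ), m) = 0
      · have hWu := C.W_up 0 m
        rw [hME, add_zero] at hWu
        rw [hWu]; exact ih
      · have := (C.jump_value hME).2
        omega
  -- downward induction
  have down : ∀ y : ℤ, y ≤ y1 →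
      (C.W ((0:ℤ), y) = C.eps ∨ C.W ((0:ℤ), y) = C.lam - 1 ∨ C.W ((0:ℤ), y) = C.lam) := by
    refine Int.le_induction_down ?_ ?_
    · left; exact hft
    · intro m hm ih
      by_cases hME : C.ME ((0:ℤ), m - 1) = 0
      · have hWu := C.W_up 0 (m - 1)
        rw [show m - 1 + 1 = m by ring, hME, add_zero] at hWu
        rw [← hWu]; exact ih
      · have := (C.jump_value hME).1
        omega
  have h1 := up y1 hy01
  have h2 := down y0 hy01
  rw [hft] at h1
  rw [hfb] at h2
  rcases abs_cases C.eps with ⟨he, _⟩ | ⟨he, _⟩ <;> omega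



end Cfg

/-! ## Building a configuration (with coordinate swap normalisation) -/

lemma smul_cancel {a b : ℤ} {v : ℤ × ℤ} (hv : v ≠ 0) (h : a • v = b • v) : a = b := by
  have e1 : a * v.1 = b * v.1 := congrArg Prod.fst h
  have e2 : a * v.2 = b * v.2 := congrArg Prod.snd h
  rcases eq_or_ne v.1 0 with h1 | h1
  · have h2 : v.2 ≠ 0 := by
      intro h2
      exact hv (Prod.ext h1 h2)
    exact mul_right_cancel₀ h2 e2
  · exact mul_right_cancel₀ h1 e1

lemma dir_swap {w : ℤ × ℤ} (h : w ∈ Dir) : (w.2, w.1) ∈ Dir := by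
  simp only [Dir, Set.mem_insert_iff, Set.mem_singleton_iff] at h ⊢
  rcases h with h|h|h|h <;> rw [h] <;> simp

lemma build (f : ℤ → ℤ × ℤ) (v : ℤ × ℤ) (N k : ℤ) (hN : 1 ≤ N) (hk : 2 ≤ |k|)
    (hv : v ≠ 0)
    (hA : ∀ n, f (n+1) - f n ∈ Dir)
    (hB : ∀ n, f (n + N) = f n + k • v)
    (hC : ∀ a b j, f a - f b = j • v → ∃ q, a - b = q * N ∧ j = q * k) : False := by
  rcases eq_or_ne v.1 0 with h0 | h0
  · -- swap coordinates
    have hv2 : v.2 ≠ 0 := by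
      intro h2; exact hv (Prod.ext h0 h2)
    refine Cfg.absurdity (Cfg.mk (fun n => ((f n).2, (f n).1)) (v.2, v.1) N k hN hk
      (by simpa using hv2) ?_ ?_ ?_)
    · intro n
      have h1 := hA n
      have e : ((f (n+1)).2, (f (n+1)).1) - ((f n).2, (f n).1)
          = ((f (n+1) - f n).2, (f (n+1) - f n).1) := by
        apply Prod.ext <;> simp
      rw [e]
      exact dir_swap h1
    · intro n
      have h1 := hB n
      apply Prod.ext <;> simp [smul_pair, h1]
    · intro a b j hab
      apply hC a b j
      have e1 : (f a).2 - (f b).2 = j * v.2 := by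
        have := congrArg Prod.fst hab; simpa [smul_pair] using this
      have e2 : (f a).1 - (f b).1 = j * v.1 := by
        have := congrArg Prod.snd hab; simpa [smul_pair] using this
      apply Prod.ext <;> simp [smul_pair] <;> omega
  · exact Cfg.absurdity (Cfg.mk f v N k hN hk h0 hA hB hC)


/-! ## Reduction from the main statement -/

lemma psum_mm (m : List (ℤ × ℤ)) {n : ℕ} (hn : n ≤ m.length) :
    psum (m ++ m) n = psum m n := by
  unfold psum; rw [List.take_append_of_le_length hn]

lemma psum_mm_add (m : List (ℤ × ℤ)) (r : ℕ) :
    psum (m ++ m) (m.length + r) = m.sum + psum m r := by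
  unfold psum; rw [List.take_append, List.take_of_length_le (by omega), Nat.add_sub_cancel_left, List.sum_append]

lemma psum_succ (m : List (ℤ × ℤ)) {k : ℕ} (hk : k < m.length) :
    psum m (k+1) = psum m k + m[k] := List.sum_take_succ m k hk

lemma psum_L (m : List (ℤ × ℤ)) : psum m m.length = m.sum := by
  unfold psum; rw [List.take_length]

lemma inj2 {m : List (ℤ × ℤ)} (hsq : SelfAvoiding (m ++ m)) {x y : ℕ}
    (hx : x ≤ 2 * m.length) (hy : y ≤ 2 * m.length)
    (h : psum (m ++ m) x = psum (m ++ m) y) : x = y := by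
  have hlen : (m ++ m).length = 2 * m.length := by simp [List.length_append]; ring
  have hfin : (⟨x, by omega⟩ : Fin ((m ++ m).length + 1)) = ⟨y, by omega⟩ :=
    hsq (by simpa using h)
  simpa using congrArg Fin.val hfin

end
end SAW

theorem stmt1 (m : List (ℤ × ℤ)) (hm : m ≠ []) (hdir : ∀ d ∈ m, d ∈ Dir)
    (hsq : SelfAvoiding (m ++ m)) :
    ∀ (i j : ℤ) (s t : ℕ), s < m.length → t < m.length → (i, s) ≠ (j, t) →
      i • m.sum + psum m s ≠ j • m.sum + psum m t := by
  classical
  intro i j s t hs ht hne heq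
  have hL : 0 < m.length := List.length_pos_iff.2 hm
  set v : ℤ × ℤ := m.sum with hvdef
  -- v ≠ 0
  have hv0 : v ≠ 0 := by
    intro h0
    have h1 : psum (m ++ m) m.length = psum (m ++ m) 0 := by
      rw [SAW.psum_mm m (le_refl m.length), SAW.psum_L, ← hvdef, h0]
      simp [psum]
    have := SAW.inj2 hsq (by omega) (by omega) h1
    omega
  have R0 : ∀ {x y : ℕ}, x < m.length → y < m.length → psum m x = psum m y → x = y := by
    intro x y hx hy h
    exact SAW.inj2 hsq (x := x) (y := y) (by omega) (by omega)
      (by rw [SAW.psum_mm m (by omega), SAW.psum_mm m (by omega)]; exact h)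
  have R1 : ∀ {x y : ℕ}, x < m.length → y ≤ m.length → psum m x = v + psum m y → False := by
    intro x y hx hy h
    have h2 : psum (m ++ m) x = psum (m ++ m) (m.length + y) := by
      rw [SAW.psum_mm m (by omega), SAW.psum_mm_add m y, ← hvdef]; exact h
    have := SAW.inj2 hsq (by omega) (by omega) h2
    omega
  have key : psum m s - psum m t = (j - i) • v := by
    rw [sub_smul]
    calc psum m s - psum m t = (i • v + psum m s) - (i • v + psum m t) := by abel
    _ = (j • v + psum m t) - (i • v + psum m t) := by rw [heq]
    _ = j • v - i • v := by abel
  have hst : s ≠ t := by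
    intro hsteq
    subst hsteq
    have h1 : (j - i) • v = (0 : ℤ) • v := by
      rw [← key, zero_smul]; abel
    have h2 := SAW.smul_cancel hv0 h1
    have : i = j := by omega
    exact hne (by rw [this])
  -- bad gaps
  set Bad : ℕ → Prop := fun g =>
    0 < g ∧ ∃ x : ℕ, x + g < m.length ∧ ∃ K : ℤ, psum m x - psum m (x + g) = K • v
    with hBadDef
  have hBadEx : ∃ g, Bad g := by
    rcases Nat.lt_or_ge s t with hlt | hge
    · exact ⟨t - s, by omega, s, by omega, j - i,
        by rw [show s + (t - s) = t by omega]; exact key⟩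
    · have hlt : t < s := by omega
      refine ⟨s - t, by omega, t, by omega, i - j, ?_⟩
      rw [show t + (s - t) = s by omega]
      have e : (i - j) • v = -((j - i) • v) := by rw [← neg_smul]; congr 1; ring
      rw [e, ← key]; abel
  obtain ⟨hg0pos, x0, hx0, K0, hps⟩ := Nat.find_spec hBadEx
  set g₀ := Nat.find hBadEx with hg₀def
  have hmin : ∀ g', g' < g₀ → ¬ Bad g' := fun g' h => Nat.find_min hBadEx h
  have hK2 : 2 ≤ |K0| := by
    by_contra hK
    have h3 : K0 = -1 ∨ K0 = 0 ∨ K0 = 1 := by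
      rcases abs_cases K0 with ⟨he, _⟩ | ⟨he, _⟩ <;> omega
    rcases h3 with h3 | h3 | h3 <;> rw [h3] at hps
    · -- K0 = -1 : psum (x0+g₀) = v + psum x0
      refine R1 (x := x0 + g₀) (y := x0) (by omega) (by omega) ?_
      have e : ((-1 : ℤ)) • v = -v := by rw [neg_smul, one_smul]
      rw [e, sub_eq_iff_eq_add] at hps
      rw [hps]; abel
    · have h4 : psum m x0 = psum m (x0 + g₀) := by
        rw [zero_smul, sub_eq_zero] at hps; exact hps
      have := R0 (x := x0) (y := x0 + g₀) (by omega) (by omega) h4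
      omega
    · refine R1 (x := x0) (y := x0 + g₀) (by omega) (by omega) ?_
      rw [one_smul, sub_eq_iff_eq_add] at hps
      exact hps
  -- build the configuration
  have hgN : (0:ℤ) < (g₀:ℤ) := by exact_mod_cast hg0pos
  set u : ℤ × ℤ := psum m (x0 + g₀) - psum m x0 with hudef
  have hu : u = (-K0) • v := by
    rw [neg_smul, ← hps, hudef]; abel
  set F : ℤ → ℤ × ℤ := fun n => (n / (g₀:ℤ)) • u + psum m (x0 + (n % (g₀:ℤ)).toNat)
    with hFdef
  have hmodf : ∀ n : ℤ, 0 ≤ n % (g₀:ℤ) ∧ n % (g₀:ℤ) < (g₀:ℤ) ∧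
      n = (g₀:ℤ) * (n / (g₀:ℤ)) + n % (g₀:ℤ) := by
    intro n
    exact ⟨Int.emod_nonneg n (by omega), Int.emod_lt_of_pos n hgN,
      (Int.mul_ediv_add_emod n _).symm⟩
  refine SAW.build F v (g₀:ℤ) (-K0) (by omega) (by rw [abs_neg]; exact hK2) hv0 ?_ ?_ ?_
  · -- steps are directions
    intro n
    obtain ⟨h1, h2, h3⟩ := hmodf n
    by_cases hcase : (n % (g₀:ℤ)).toNat + 1 < g₀
    · have hdm := (Int.ediv_emod_unique (a := n+1) (b := (g₀:ℤ))
        (r := n % (g₀:ℤ) + 1) (q := n / (g₀:ℤ)) hgN).2 ⟨by omega, by omega, by omega⟩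
      have ht1 : (n % (g₀:ℤ) + 1).toNat = (n % (g₀:ℤ)).toNat + 1 := by omega
      have hk : x0 + (n % (g₀:ℤ)).toNat < m.length := by omega
      have e : F (n+1) = (n / (g₀:ℤ)) • u
          + (psum m (x0 + (n % (g₀:ℤ)).toNat) + m[x0 + (n % (g₀:ℤ)).toNat]) := by
        simp only [hFdef]
        rw [hdm.1, hdm.2, ht1, show x0 + ((n % (g₀:ℤ)).toNat + 1)
          = (x0 + (n % (g₀:ℤ)).toNat) + 1 by omega, SAW.psum_succ m hk]
      have hFn : F n = (n / (g₀:ℤ)) • u + psum m (x0 + (n % (g₀:ℤ)).toNat) := by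
        simp only [hFdef]
      rw [e, hFn]
      have hmem := hdir _ (List.getElem_mem hk)
      convert hmem using 2
      abel
    · have hexp : (g₀:ℤ) * (n / (g₀:ℤ) + 1) = (g₀:ℤ) * (n / (g₀:ℤ)) + (g₀:ℤ) := by ring
      have hdm := (Int.ediv_emod_unique (a := n+1) (b := (g₀:ℤ))
        (r := 0) (q := n / (g₀:ℤ) + 1) hgN).2 ⟨by omega, by omega, by omega⟩
      have hreq : (n % (g₀:ℤ)).toNat = g₀ - 1 := by omega
      have hk : x0 + (g₀ - 1) < m.length := by omega
      have e4 : psum m (x0 + g₀) = psum m (x0 + (g₀ - 1)) + m[x0 + (g₀-1)] := by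
        have h6 := SAW.psum_succ m hk
        rw [show (x0 + (g₀ - 1)) + 1 = x0 + g₀ by omega] at h6
        exact h6
      have e : F (n+1) = ((n / (g₀:ℤ)) + 1) • u + psum m x0 := by
        simp only [hFdef]
        rw [hdm.1, hdm.2]
        norm_num
      have hFn : F n = (n / (g₀:ℤ)) • u + psum m (x0 + (g₀ - 1)) := by
        simp only [hFdef]
        rw [hreq]
      rw [e, hFn]
      have hmem := hdir _ (List.getElem_mem hk)
      convert hmem using 2
      rw [add_smul, one_smul, hudef, e4]
      abel
  · -- periodicity
    intro n
    have hd : (n + (g₀:ℤ)) / (g₀:ℤ) = n / (g₀:ℤ) + 1 := by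
      have h5 := Int.add_mul_ediv_right n 1 (show (g₀:ℤ) ≠ 0 by omega)
      simpa using h5
    have hm2 : (n + (g₀:ℤ)) % (g₀:ℤ) = n % (g₀:ℤ) := by
      have h5 := Int.add_mul_emod_self_left (a := n) (b := (g₀:ℤ)) (c := 1)
      simpa using h5
    simp only [hFdef]
    rw [hd, hm2, add_smul, one_smul, ← hu]
    abel
  · -- injectivity mod v
    intro a b jj hab
    obtain ⟨ha1, ha2, ha3⟩ := hmodf a
    obtain ⟨hb1, hb2, hb3⟩ := hmodf b
    set ra := (a % (g₀:ℤ)).toNat with hra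
    set rb := (b % (g₀:ℤ)).toNat with hrb
    have hFa : F a = (a / (g₀:ℤ)) • u + psum m (x0 + ra) := by simp only [hFdef, hra]
    have hFb : F b = (b / (g₀:ℤ)) • u + psum m (x0 + rb) := by simp only [hFdef, hrb]
    by_cases hr : ra = rb
    · have h4 : ((a / (g₀:ℤ) - b / (g₀:ℤ)) * (-K0)) • v = jj • v := by
        rw [← smul_smul, ← hu]
        have e : F a - F b = (a / (g₀:ℤ) - b / (g₀:ℤ)) • u := by
          rw [hFa, hFb, hr, sub_smul]; abel
        rw [← e]; exact hab
      have h5 := SAW.smul_cancel hv0 h4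
      refine ⟨a / (g₀:ℤ) - b / (g₀:ℤ), ?_, h5.symm⟩
      have hmodeq : a % (g₀:ℤ) = b % (g₀:ℤ) := by omega
      have hx1 : (g₀:ℤ) * (a / (g₀:ℤ)) - (g₀:ℤ) * (b / (g₀:ℤ))
          = (a / (g₀:ℤ) - b / (g₀:ℤ)) * (g₀:ℤ) := by ring
      omega
    · exfalso
      have h5 : psum m (x0 + ra) - psum m (x0 + rb)
          = (jj + (a / (g₀:ℤ) - b / (g₀:ℤ)) * K0) • v := by
        have e : psum m (x0 + ra) - psum m (x0 + rb)
            = (F a - F b) - (a / (g₀:ℤ) - b / (g₀:ℤ)) • u := by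
          rw [hFa, hFb, sub_smul]; abel
        rw [e, hab, hu, smul_smul, ← sub_smul]
        congr 1; ring
      have hralt : ra < g₀ := by omega
      have hrblt : rb < g₀ := by omega
      rcases Nat.lt_or_ge ra rb with hlt | hge
      · refine hmin (rb - ra) (by omega)
          ⟨by omega, x0 + ra, by omega, jj + (a / (g₀:ℤ) - b / (g₀:ℤ)) * K0, ?_⟩
        rw [show x0 + ra + (rb - ra) = x0 + rb by omega]
        exact h5
      · have hlt2 : rb < ra := by omega
        refine hmin (ra - rb) (by omega)
          ⟨by omega, x0 + rb, by omega, -(jj + (a / (g₀:ℤ) - b / (g₀:ℤ)) * K0), ?_⟩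
        rw [show x0 + rb + (ra - rb) = x0 + ra by omega, neg_smul, ← h5]
        abel
end

section
/- In a confluent tile assembly system, any two producible (stable, seed-containing) assemblies α and α′ have a common producible extension: there is a producible assembly β whose domain contains the union of the domains of α and α′ and which restricts to α on dom(α) and to α′ on dom(α′). Consequently, there is a unique maximal producible assembly α_max such that the domain of every producible assembly is contained in dom(α_max). -/
/-- A tile type over the glue alphabet `G`: a glue for each direction. -/
abbrev Tile (G : Type) := (ℤ × ℤ) → G

/-- The domain of an assembly. -/
def Dom {G : Type} (α : ℤ × ℤ → Option (Tile G)) : Set (ℤ × ℤ) := {v | α v ≠ none}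

/-- `v` and `w` are joined by an edge of the binding graph of `α`:
they are adjacent and the abutting glues match. -/
def BindEdge {G : Type} (α : ℤ × ℤ → Option (Tile G)) (v w : ℤ × ℤ) : Prop :=
  ∃ d ∈ Dir, w = v + d ∧ ∃ t t' : Tile G, α v = some t ∧ α w = some t' ∧ t d = t' (-d)

/-- An assembly is stable if its binding graph is connected. -/
def Stable {G : Type} (α : ℤ × ℤ → Option (Tile G)) : Prop :=
  ∀ v ∈ Dom α, ∀ w ∈ Dom α,
    Relation.ReflTransGen (fun x y => BindEdge α x y ∨ BindEdge α y x) v w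

/-- Producible: stable, seed `σ` at the origin, and all tiles from `T ∪ {σ}`. -/
def Producible {G : Type} (T : Set (Tile G)) (σ : Tile G)
    (α : ℤ × ℤ → Option (Tile G)) : Prop :=
  Stable α ∧ α ((0,0) : ℤ × ℤ) = some σ ∧ ∀ v t, α v = some t → t ∈ T ∪ {σ}

/-- Two assemblies are compatible if they agree on the intersection of their domains. -/
def Compatible {G : Type} (α β : ℤ × ℤ → Option (Tile G)) : Prop :=
  ∀ v t t', α v = some t → β v = some t' → t = t'

/-- A TAS is confluent if every two producible assemblies are compatible. -/
def Confluent {G : Type} (T : Set (Tile G)) (σ : Tile G) : Prop :=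
  ∀ α β, Producible T σ α → Producible T σ β → Compatible α β

section Aux
variable {G : Type}

lemma mem_dom' {α : ℤ × ℤ → Option (Tile G)} {v : ℤ × ℤ} {t : Tile G}
    (h : α v = some t) : v ∈ Dom α := by simp [Dom, h]

lemma lift_edge {α γ : ℤ × ℤ → Option (Tile G)}
    (hag : ∀ v ∈ Dom α, γ v = α v) {x y : ℤ × ℤ} (he : BindEdge α x y) :
    BindEdge γ x y := by
  obtain ⟨d, hd, hw, t, t', hx, hy, hg⟩ := he
  exact ⟨d, hd, hw, t, t', by rw [hag x (mem_dom' hx)]; exact hx,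
    by rw [hag y (mem_dom' hy)]; exact hy, hg⟩

lemma lift_path {α γ : ℤ × ℤ → Option (Tile G)}
    (hag : ∀ v ∈ Dom α, γ v = α v) {x y : ℤ × ℤ}
    (h : Relation.ReflTransGen (fun a b => BindEdge α a b ∨ BindEdge α b a) x y) :
    Relation.ReflTransGen (fun a b => BindEdge γ a b ∨ BindEdge γ b a) x y :=
  Relation.ReflTransGen.mono (r := fun a b => BindEdge α a b ∨ BindEdge α b a)
    (fun _ _ hab => hab.imp (lift_edge hag) (lift_edge hag)) x y h

lemma stable_of_ext {T : Set (Tile G)} {σ : Tile G} {γ : ℤ × ℤ → Option (Tile G)}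
    (h : ∀ v ∈ Dom γ, ∃ α, Producible T σ α ∧ (∀ w ∈ Dom α, γ w = α w) ∧ v ∈ Dom α) :
    Stable γ := by
  intro v hv w hw
  obtain ⟨α, hα, hag, hvα⟩ := h v hv
  obtain ⟨β, hβ, hbg, hwβ⟩ := h w hw
  have p1 := lift_path hag (hα.1 v hvα ((0,0) : ℤ × ℤ) (mem_dom' hα.2.1))
  have p2 := lift_path hbg (hβ.1 ((0,0) : ℤ × ℤ) (mem_dom' hβ.2.1) w hwβ)
  exact p1.trans p2

/-- The seed-only assembly. -/
def seedAsm (σ : Tile G) : ℤ × ℤ → Option (Tile G) :=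
  fun v => if v = ((0,0) : ℤ × ℤ) then some σ else none

lemma seed_producible (T : Set (Tile G)) (σ : Tile G) : Producible T σ (seedAsm σ) := by
  refine ⟨?_, by simp [seedAsm], ?_⟩
  · intro v hv w hw
    have hv0 : v = ((0,0) : ℤ × ℤ) := by
      by_contra h; simp [Dom, seedAsm, h] at hv
    have hw0 : w = ((0,0) : ℤ × ℤ) := by
      by_contra h; simp [Dom, seedAsm, h] at hw
    rw [hv0, hw0]
  · intro v t ht
    by_cases h : v = ((0,0) : ℤ × ℤ)
    · simp [seedAsm, h] at ht; simp [← ht]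
    · simp [seedAsm, h] at ht

lemma union_producible {T : Set (Tile G)} {σ : Tile G} (hconf : Confluent T σ)
    {α β : ℤ × ℤ → Option (Tile G)} (hα : Producible T σ α) (hβ : Producible T σ β) :
    ∃ γ, Producible T σ γ ∧ Dom α ∪ Dom β ⊆ Dom γ ∧
      (∀ v ∈ Dom α, γ v = α v) ∧ (∀ v ∈ Dom β, γ v = β v) := by
  classical
  set γ : ℤ × ℤ → Option (Tile G) := fun v => (α v).elim (β v) some with hγ
  have hagree_a : ∀ v ∈ Dom α, γ v = α v := by
    intro v hv
    obtain ⟨t, ht⟩ := Option.ne_none_iff_exists'.mp hv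
    simp [hγ, ht]
  have hagree_b : ∀ v ∈ Dom β, γ v = β v := by
    intro v hv
    obtain ⟨t, ht⟩ := Option.ne_none_iff_exists'.mp hv
    cases hav : α v with
    | none => simp [hγ, hav]
    | some s => simp [hγ, hav, ht, hconf α β hα hβ v s t hav ht]
  have hdomsub : Dom α ∪ Dom β ⊆ Dom γ := by
    rintro v (hv | hv)
    · rw [Dom, Set.mem_setOf_eq, hagree_a v hv]; exact hv
    · rw [Dom, Set.mem_setOf_eq, hagree_b v hv]; exact hv
  have hdommem : ∀ v ∈ Dom γ, v ∈ Dom α ∨ v ∈ Dom β := by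
    intro v hv
    cases hav : α v with
    | some s => exact Or.inl (mem_dom' hav)
    | none =>
      refine Or.inr ?_
      have : γ v = β v := by simp [hγ, hav]
      rw [Dom, Set.mem_setOf_eq, this] at hv
      exact hv
  refine ⟨γ, ⟨?_, ?_, ?_⟩, hdomsub, hagree_a, hagree_b⟩
  · apply stable_of_ext
    intro v hv
    rcases hdommem v hv with h | h
    · exact ⟨α, hα, hagree_a, h⟩
    · exact ⟨β, hβ, hagree_b, h⟩
  · rw [hagree_a _ (mem_dom' hα.2.1)]; exact hα.2.1
  · intro v t ht
    rcases hdommem v (mem_dom' ht) with h | h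
    · exact hα.2.2 v t ((hagree_a v h).symm.trans ht)
    · exact hβ.2.2 v t ((hagree_b v h).symm.trans ht)

end Aux

theorem stmt4 {G : Type} [Finite G] (T : Set (Tile G)) (hT : T.Finite) (σ : Tile G)
    (hconf : Confluent T σ) :
    (∀ α β, Producible T σ α → Producible T σ β →
      ∃ γ, Producible T σ γ ∧ Dom α ∪ Dom β ⊆ Dom γ ∧
        (∀ v ∈ Dom α, γ v = α v) ∧ (∀ v ∈ Dom β, γ v = β v)) ∧
    (∃! αmax, Producible T σ αmax ∧ ∀ α, Producible T σ α → Dom α ⊆ Dom αmax) := by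
  classical
  set amax : ℤ × ℤ → Option (Tile G) := fun v =>
    if h : ∃ α, Producible T σ α ∧ (α v).isSome then (Classical.choose h) v else none
    with hamax
  have hext : ∀ α, Producible T σ α → ∀ v ∈ Dom α, amax v = α v := by
    intro α hα v hv
    obtain ⟨t, ht⟩ := Option.ne_none_iff_exists'.mp hv
    have hex : ∃ α', Producible T σ α' ∧ ((α' v).isSome : Prop) :=
      ⟨α, hα, by simp [ht]⟩
    obtain ⟨hp, hs⟩ := Classical.choose_spec hex
    obtain ⟨t', ht'⟩ := Option.isSome_iff_exists.mp hs
    have heq : t' = t := hconf _ _ hp hα v t' t ht' ht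
    simp [hamax, dif_pos hex, ht', ht, heq]
  have hdom : ∀ α, Producible T σ α → Dom α ⊆ Dom amax := by
    intro α hα v hv
    rw [Dom, Set.mem_setOf_eq, hext α hα v hv]; exact hv
  have hwit : ∀ v ∈ Dom amax, ∃ α, Producible T σ α ∧
      (∀ w ∈ Dom α, amax w = α w) ∧ v ∈ Dom α := by
    intro v hv
    rw [Dom, Set.mem_setOf_eq, hamax] at hv
    by_cases hex : ∃ α', Producible T σ α' ∧ ((α' v).isSome : Prop)
    · obtain ⟨hp, hs⟩ := Classical.choose_spec hex
      obtain ⟨t', ht'⟩ := Option.isSome_iff_exists.mp hs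
      exact ⟨_, hp, hext _ hp, mem_dom' ht'⟩
    · simp [dif_neg hex] at hv
  have hmaxprod : Producible T σ amax := by
    refine ⟨stable_of_ext hwit, ?_, ?_⟩
    · rw [hext (seedAsm σ) (seed_producible T σ) ((0,0) : ℤ × ℤ)
        (mem_dom' (show seedAsm σ ((0,0) : ℤ × ℤ) = some σ by simp [seedAsm]))]
      simp [seedAsm]
    · intro v t ht
      obtain ⟨α, hα, hag, hv⟩ := hwit v (mem_dom' ht)
      exact hα.2.2 v t ((hag v hv).symm.trans ht)
  refine ⟨fun α β hα hβ => union_producible hconf hα hβ, amax, ⟨hmaxprod, hdom⟩, ?_⟩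
  rintro α' ⟨hα', hdom'⟩
  funext v
  by_cases hv : v ∈ Dom α'
  · exact (hext α' hα' v hv).symm
  · have hv2 : v ∉ Dom amax := fun h => hv (hdom' amax hmaxprod h)
    rw [Dom, Set.mem_setOf_eq, not_not] at hv hv2
    rw [hv, hv2]
end

section
/- In a confluent tile assembly system, every stable producible assembly is the union of its assembly paths: for every point v in the domain of a producible assembly α, there is a producible assembly whose binding graph is a simple path from the origin (0,0) to v, agreeing with α on its domain. -/
lemma dir_neg {d : ℤ × ℤ} (hd : d ∈ Dir) : -d ∈ Dir := by
  simp only [Dir, Set.mem_insert_iff, Set.mem_singleton_iff] at hd ⊢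
  rcases hd with rfl | rfl | rfl | rfl <;> simp [Prod.ext_iff]

lemma bindEdge_symm {G : Type} {α : ℤ × ℤ → Option (Tile G)} {x y : ℤ × ℤ}
    (h : BindEdge α x y) : BindEdge α y x := by
  obtain ⟨d, hd, hw, t, t', hx, hy, hg⟩ := h
  exact ⟨-d, dir_neg hd, by rw [hw]; ring, t', t, hy, hx, by rw [neg_neg, hg]⟩

lemma rtg_symm {X : Type} {r : X → X → Prop} (hsym : Symmetric r) {a b : X}
    (h : Relation.ReflTransGen r a b) : Relation.ReflTransGen r b a := by
  induction h with
  | refl => exact Relation.ReflTransGen.refl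
  | tail hab hbc ih => exact Relation.ReflTransGen.head (hsym hbc) ih

lemma rtg_exists_chain {X : Type} {R : X → X → Prop} {a b : X}
    (h : Relation.ReflTransGen R a b) :
    ∃ n : ℕ, ∃ f : ℕ → X, f 0 = a ∧ f n = b ∧ ∀ k < n, R (f k) (f (k+1)) := by
  induction h with
  | refl => exact ⟨0, fun _ => a, rfl, rfl, by omega⟩
  | @tail b c hab hbc ih =>
    obtain ⟨n, f, h0, hn, hedge⟩ := ih
    refine ⟨n+1, fun k => if k = n+1 then c else f k, by simp [h0], by simp, ?_⟩
    intro k hk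
    by_cases hkn : k = n
    · subst hkn; simpa [hn] using hbc
    · have h1 : k ≠ n + 1 := by omega
      have h2 : k + 1 ≠ n + 1 := by omega
      simpa [h1, h2, hkn] using hedge k (by omega)

theorem stmt5 {G : Type} [Finite G] (T : Set (Tile G)) (hT : T.Finite) (σ : Tile G)
    (hconf : Confluent T σ)
    (α : ℤ × ℤ → Option (Tile G)) (hα : Producible T σ α)
    (v : ℤ × ℤ) (hv : v ∈ Dom α) :
    ∃ (n : ℕ) (f : ℕ → ℤ × ℤ) (β : ℤ × ℤ → Option (Tile G)),
      Producible T σ β ∧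
      f 0 = ((0,0) : ℤ × ℤ) ∧ f n = v ∧
      (∀ i j, i ≤ n → j ≤ n → f i = f j → i = j) ∧
      Dom β = {w | ∃ k ≤ n, f k = w} ∧
      (∀ k < n, BindEdge β (f k) (f (k+1))) ∧
      (∀ w ∈ Dom β, β w = α w) := by
  classical
  obtain ⟨hstab, hseed, htiles⟩ := hα
  have h0dom : ((0,0) : ℤ × ℤ) ∈ Dom α := by
    simp only [Dom, Set.mem_setOf_eq, hseed]
    exact Option.some_ne_none _
  set R : (ℤ × ℤ) → (ℤ × ℤ) → Prop :=
    fun x y => BindEdge α x y ∨ BindEdge α y x with hR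
  -- property of a path function
  have hrtg : Relation.ReflTransGen R ((0,0) : ℤ × ℤ) v := hstab _ h0dom _ hv
  set P : ℕ → Prop := fun n => ∃ f : ℕ → ℤ × ℤ,
    f 0 = ((0,0) : ℤ × ℤ) ∧ f n = v ∧ ∀ k < n, R (f k) (f (k+1)) with hP
  have hPex : ∃ n, P n := by
    obtain ⟨n, f, h0, hn, he⟩ := rtg_exists_chain hrtg
    exact ⟨n, f, h0, hn, he⟩
  let n := Nat.find hPex
  obtain ⟨f, hf0, hfn, hfe⟩ : P n := Nat.find_spec hPex
  have hmin : ∀ m < n, ¬ P m := fun m hm => Nat.find_min hPex hm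
  -- injectivity
  have hinj : ∀ i j, i ≤ n → j ≤ n → f i = f j → i = j := by
    intro i j hi hj hij
    by_contra hne
    -- wlog i < j
    wlog hlt : i < j generalizing i j
    · exact this j i hj hi hij.symm (Ne.symm hne) (by omega)
    apply hmin (n - (j - i)) (by omega)
    refine ⟨fun k => if k < i then f k else f (k + (j - i)), ?_, ?_, ?_⟩
    · by_cases h0 : 0 < i
      · simpa [h0] using hf0
      · have : i = 0 := by omega
        subst this
        simp only [lt_irrefl, if_neg (lt_irrefl 0)]
        simpa using hij.symm.trans hf0
    · have h1 : ¬ (n - (j - i) < i) := by omega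
      have h2 : n - (j - i) + (j - i) = n := by omega
      simp [h1, h2, hfn]
    · intro k hk
      by_cases h1 : k + 1 < i
      · have h2 : k < i := by omega
        simpa [h1, h2] using hfe k (by omega)
      · by_cases h2 : k < i
        · -- k + 1 = i
          have h3 : k + 1 = i := by omega
          have h4 : k + 1 + (j - i) = j := by omega
          simp only [if_pos h2, if_neg h1]
          rw [h4, ← hij, ← h3]
          exact hfe k (by omega)
        · have h5 : ¬ (k < i) := h2
          simp only [if_neg h1, if_neg h5]
          have := hfe (k + (j - i)) (by omega)
          have h6 : k + (j - i) + 1 = k + 1 + (j - i) := by omega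
          rwa [h6] at this
  -- all path points in Dom α
  have hdomf : ∀ k ≤ n, f k ∈ Dom α := by
    intro k hk
    rcases Nat.lt_or_ge k n with h | h
    · rcases hfe k h with he | he
      · obtain ⟨d, _, _, t, t', hx, _⟩ := he; simp [Dom, hx]
      · obtain ⟨d, _, _, t, t', _, hy, _⟩ := he; simp [Dom, hy]
    · have : k = n := by omega
      subst this; rw [hfn]; exact hv
  -- define β
  set S : Set (ℤ × ℤ) := {w | ∃ k ≤ n, f k = w} with hS
  set β : ℤ × ℤ → Option (Tile G) := fun w => if w ∈ S then α w else none with hβ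
  have hβeq : ∀ w ∈ S, β w = α w := by intro w hw; simp [hβ, hw]
  have hDomβ : Dom β = S := by
    ext w
    simp only [Dom, Set.mem_setOf_eq, hβ]
    constructor
    · intro h
      by_contra hw
      simp [hw] at h
    · intro hw
      obtain ⟨k, hk, hkw⟩ := hw
      have := hdomf k hk
      rw [hkw] at this
      simpa [Dom, show w ∈ S from ⟨k, hk, hkw⟩] using this
  have hfS : ∀ k ≤ n, f k ∈ S := fun k hk => ⟨k, hk, rfl⟩
  -- β-edges along path
  have hβedge : ∀ k < n, BindEdge β (f k) (f (k+1)) := by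
    intro k hk
    have hα' : BindEdge α (f k) (f (k+1)) := by
      rcases hfe k hk with h | h
      · exact h
      · exact bindEdge_symm h
    obtain ⟨d, hd, hw, t, t', hx, hy, hg⟩ := hα'
    exact ⟨d, hd, hw, t, t', by rw [hβeq _ (hfS k (by omega))]; exact hx,
      by rw [hβeq _ (hfS (k+1) (by omega))]; exact hy, hg⟩
  -- stability of β
  have hconn : ∀ k ≤ n, Relation.ReflTransGen
      (fun x y => BindEdge β x y ∨ BindEdge β y x) (f 0) (f k) := by
    intro k hk
    induction k with
    | zero => exact Relation.ReflTransGen.refl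
    | succ m ih =>
      exact (ih (by omega)).tail (Or.inl (hβedge m (by omega)))
  have hstabβ : Stable β := by
    intro x hx y hy
    rw [hDomβ] at hx hy
    obtain ⟨k, hk, rfl⟩ := hx
    obtain ⟨m, hm, rfl⟩ := hy
    exact (rtg_symm (fun a b h => h.symm) (hconn k hk)).trans (hconn m hm)
  have h0S : ((0,0) : ℤ × ℤ) ∈ S := ⟨0, Nat.zero_le n, hf0⟩
  refine ⟨n, f, β, ⟨hstabβ, ?_, ?_⟩, hf0, hfn, hinj, hDomβ, hβedge, ?_⟩
  · rw [hβeq _ h0S]; exact hseed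
  · intro w t hw
    apply htiles w
    by_cases hwS : w ∈ S
    · rwa [hβeq _ hwS] at hw
    · simp [hβ, hwS] at hw
  · intro w hw
    rw [hDomβ] at hw
    exact hβeq w hw
end

section
/- Let b, b′ ∈ ℤ² be nonzero collinear vectors pointing in the same direction (b = c·b′ for some positive rational c), and let a, a′ ∈ ℤ². Then there exist a finite set F₀ ⊆ ℤ², a finite set F₁ ⊆ ℤ², and a nonzero vector v ∈ ℤ² (a common multiple of b and b′) such that (a + ℕ·b) ∩ (a′ + ℕ·b′) = F₀ ∪ (F₁ + ℕ·v). -/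
theorem stmt9 (a a' b b' : ℤ × ℤ) (hb : b ≠ 0) (hb' : b' ≠ 0)
    (hpos : ∃ c : ℚ, 0 < c ∧ (b.1 : ℚ) = c * b'.1 ∧ (b.2 : ℚ) = c * b'.2) :
    ∃ (F₀ F₁ : Finset (ℤ × ℤ)) (v : ℤ × ℤ),
      v ≠ 0 ∧
      (∃ k : ℕ, 0 < k ∧ v = k • b) ∧ (∃ k : ℕ, 0 < k ∧ v = k • b') ∧
      ({x | ∃ n : ℕ, x = a + n • b} ∩ {x | ∃ n : ℕ, x = a' + n • b'}
        = ↑F₀ ∪ {x | ∃ f ∈ F₁, ∃ n : ℕ, x = f + n • v}) := by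
  classical
  obtain ⟨c, hc, h1, h2⟩ := hpos
  set q : ℕ := c.den with hqdef
  have hq : 0 < q := c.pos
  set p : ℕ := c.num.toNat with hpdef
  have hnum : 0 < c.num := Rat.num_pos.mpr hc
  have hp : 0 < p := by omega
  have hpz : (p : ℤ) = c.num := Int.toNat_of_nonneg hnum.le
  have key : ∀ z z' : ℤ, (z : ℚ) = c * z' → (q : ℤ) * z = (p : ℤ) * z' := by
    intro z z' h
    have hdc : (q : ℚ) * c = c.num := by
      rw [mul_comm]; exact_mod_cast Rat.mul_den_eq_num c
    have : ((q : ℤ) * z : ℚ) = ((p : ℤ) * z' : ℚ) := by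
      push_cast [hpz]
      rw [h, ← mul_assoc, hdc]
    exact_mod_cast this
  have hv : q • b = p • b' := by
    have e1 := key b.1 b'.1 h1
    have e2 := key b.2 b'.2 h2
    have : ∀ (k : ℕ) (w : ℤ × ℤ), k • w = ((k : ℤ) * w.1, (k : ℤ) * w.2) := by
      intro k w
      ext <;> simp [nsmul_eq_mul]
    rw [this, this, e1, e2]
  have hvne : q • b ≠ (0 : ℤ × ℤ) := by
    intro h
    apply hb
    have h1' : (q : ℤ) * b.1 = 0 := by
      have := congrArg Prod.fst h
      simpa [nsmul_eq_mul] using this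
    have h2' : (q : ℤ) * b.2 = 0 := by
      have := congrArg Prod.snd h
      simpa [nsmul_eq_mul] using this
    have hqz : (q : ℤ) ≠ 0 := by exact_mod_cast hq.ne'
    ext
    · exact (mul_eq_zero.mp h1').resolve_left hqz
    · exact (mul_eq_zero.mp h2').resolve_left hqz
  set P : ℕ → Prop := fun n => ∃ m : ℕ, a + n • b = a' + m • b' with hP
  have step : ∀ n, P n → P (n + q) := by
    rintro n ⟨m, hm⟩
    refine ⟨m + p, ?_⟩
    calc a + (n + q) • b = (a + n • b) + q • b := by rw [add_nsmul, add_assoc]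
      _ = (a' + m • b') + p • b' := by rw [hm, hv]
      _ = a' + (m + p) • b' := by rw [add_nsmul, add_assoc]
  have steps : ∀ k n, P n → P (n + q * k) := by
    intro k
    induction k with
    | zero => simp only [Nat.mul_zero, Nat.add_zero]; exact fun n h => h
    | succ k ih =>
      intro n hn
      have h2 : n + q * (k + 1) = (n + q * k) + q := by ring
      rw [h2]
      exact step _ (ih n hn)
  set Q : ℕ → Prop := fun r => ∃ n, P n ∧ n % q = r with hQdef
  set N : ℕ → ℕ := fun r => if h : Q r then Nat.find h else 0 with hNdef
  refine ⟨∅, ((Finset.range q).filter Q).image (fun r => a + N r • b), q • b,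
    hvne, ⟨q, hq, rfl⟩, ⟨p, hp, hv⟩, ?_⟩
  ext x
  simp only [Set.mem_inter_iff, Set.mem_setOf_eq, Finset.coe_empty, Set.empty_union,
    Set.mem_union]
  constructor
  · rintro ⟨⟨n, rfl⟩, ⟨m, hm⟩⟩
    have hPn : P n := ⟨m, hm⟩
    have hQr : Q (n % q) := ⟨n, hPn, rfl⟩
    have hNr : N (n % q) = Nat.find hQr := by rw [hNdef]; simp [dif_pos hQr]
    have spec := Nat.find_spec hQr
    have hle : Nat.find hQr ≤ n := Nat.find_min' hQr ⟨hPn, rfl⟩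
    have hmodeq : Nat.find hQr ≡ n [MOD q] := by
      unfold Nat.ModEq
      rw [spec.2]
    obtain ⟨k, hk⟩ := (Nat.modEq_iff_dvd' hle).mp hmodeq
    have hn : n = Nat.find hQr + q * k := by omega
    refine ⟨a + N (n % q) • b,
      Finset.mem_image.mpr ⟨n % q,
        Finset.mem_filter.mpr ⟨Finset.mem_range.mpr (Nat.mod_lt _ hq), hQr⟩, rfl⟩,
      k, ?_⟩
    rw [hNr, add_assoc, smul_smul, ← add_nsmul]
    have he : Nat.find hQr + k * q = n := by rw [Nat.mul_comm k q]; exact hn.symm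
    rw [he]
  · rintro ⟨f, hf, k, rfl⟩
    obtain ⟨r, hr, rfl⟩ := Finset.mem_image.mp hf
    have hQr : Q r := (Finset.mem_filter.mp hr).2
    have hNr : N r = Nat.find hQr := by rw [hNdef]; simp [dif_pos hQr]
    have spec := Nat.find_spec hQr
    have hPk : P (Nat.find hQr + q * k) := steps k _ spec.1
    obtain ⟨m, hm⟩ := hPk
    have hx : a + N r • b + k • q • b = a + (Nat.find hQr + q * k) • b := by
      rw [hNr, add_nsmul, ← add_assoc, smul_smul, mul_comm]
    exact ⟨⟨Nat.find hQr + q * k, hx⟩, ⟨m, hx.trans hm⟩⟩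
end

section
/- Consider a quipu Q: a finite rooted directed graph whose vertices are labelled by tile types and whose arcs are labelled by unit directions of ℤ², such that from the root there is a unique path to each vertex, the arc-labels of every rooted walk form a self-avoiding path in ℤ², and every cycle has a nonzero displacement vector. Then the cover of any vertex x (the set of displacement vectors of rooted walks ending at x) is a semi-linear subset of ℤ² of one of the forms {a}, a + ℕ·b with b ≠ 0, or a + ℕ·b + ℕ·c with b, c nonzero and non-collinear, according as every rooted walk to x meets zero, one, or two cycles. -/
/-- `f` is a walk of length `n` from `r` to `x` along arcs `E`. -/
def IsWalk {V : Type} (E : V → V → Prop) (f : ℕ → V) (n : ℕ) (r x : V) : Prop :=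
  f 0 = r ∧ f n = x ∧ ∀ i < n, E (f i) (f (i+1))

/-- Displacement vector of a walk: the sum of its arc labels. -/
def WalkDisp {V : Type} (lab : V → V → ℤ × ℤ) (f : ℕ → V) (n : ℕ) : ℤ × ℤ :=
  ∑ i ∈ Finset.range n, lab (f i) (f (i+1))

/-- The cover of vertex `x`: displacement vectors of rooted walks ending at `x`. -/
def Cover {V : Type} (E : V → V → Prop) (lab : V → V → ℤ × ℤ) (r x : V) : Set (ℤ × ℤ) :=
  {s | ∃ (f : ℕ → V) (n : ℕ), IsWalk E f n r x ∧ s = WalkDisp lab f n}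

/-- Reachability along arcs. -/
def Reach {V : Type} (E : V → V → Prop) : V → V → Prop := Relation.ReflTransGen E

/-- A vertex lies on a cycle. -/
def Cyclic {V : Type} (E : V → V → Prop) (v : V) : Prop := ∃ w, E v w ∧ Reach E w v

/-- Two vertices lie on the same cycle (mutual reachability). -/
def SameCycle {V : Type} (E : V → V → Prop) (u v : V) : Prop := Reach E u v ∧ Reach E v u

namespace Q17

variable {V : Type}

theorem isWalk_congr {E : V → V → Prop} {f g : ℕ → V} {n : ℕ} {a b : V}
    (hw : IsWalk E f n a b) (hfg : ∀ i ≤ n, f i = g i) : IsWalk E g n a b := by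
  obtain ⟨h0, hn, he⟩ := hw
  refine ⟨?_, ?_, ?_⟩
  · rw [← hfg 0 (Nat.zero_le _)]; exact h0
  · rw [← hfg n le_rfl]; exact hn
  · intro i hi
    rw [← hfg i (le_of_lt hi), ← hfg (i+1) hi]
    exact he i hi

theorem walkDisp_congr (lab : V → V → ℤ × ℤ) {f g : ℕ → V} {n : ℕ}
    (hfg : ∀ i ≤ n, f i = g i) : WalkDisp lab f n = WalkDisp lab g n :=
  Finset.sum_congr rfl (fun i hi => by
    rw [Finset.mem_range] at hi
    rw [hfg i hi.le, hfg (i+1) hi])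

/-- concatenation of walks -/
def wcat (f : ℕ → V) (n : ℕ) (g : ℕ → V) : ℕ → V :=
  fun t => if t ≤ n then f t else g (t - n)

theorem wcat_left {f : ℕ → V} {n : ℕ} {g : ℕ → V} {t : ℕ} (h : t ≤ n) :
    wcat f n g t = f t := by simp [wcat, h]

theorem wcat_right {f : ℕ → V} {n : ℕ} {g : ℕ → V} {t : ℕ} (h : n < t) :
    wcat f n g t = g (t - n) := by
  have : ¬ (t ≤ n) := by omega
  simp [wcat, this]

theorem isWalk_wcat {E : V → V → Prop} {f g : ℕ → V} {n m : ℕ} {a b c : V}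
    (hf : IsWalk E f n a b) (hg : IsWalk E g m b c) :
    IsWalk E (wcat f n g) (n + m) a c := by
  obtain ⟨hf0, hfn, hfe⟩ := hf
  obtain ⟨hg0, hgm, hge⟩ := hg
  refine ⟨?_, ?_, ?_⟩
  · rw [wcat_left (Nat.zero_le _)]; exact hf0
  · rcases Nat.eq_zero_or_pos m with hm | hm
    · subst hm
      show wcat f n g (n + 0) = c
      rw [Nat.add_zero, wcat_left le_rfl, hfn, ← hg0, hgm]
    · rw [wcat_right (by omega)]
      have : n + m - n = m := by omega
      rw [this, hgm]
  · intro i hi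
    rcases Nat.lt_or_ge i n with h1 | h1
    · rw [wcat_left (by omega), wcat_left (by omega)]
      exact hfe i h1
    · by_cases h2 : i = n
      · subst h2
        rw [wcat_left le_rfl, wcat_right (by omega)]
        have h4 : i + 1 - i = 1 := by omega
        rw [h4, hfn, ← hg0]
        exact hge 0 (by omega)
      · rw [wcat_right (by omega), wcat_right (by omega)]
        have h3 : i + 1 - n = (i - n) + 1 := by omega
        rw [h3]
        exact hge (i - n) (by omega)

theorem walkDisp_wcat (lab : V → V → ℤ × ℤ) {f g : ℕ → V} {n m : ℕ} (hb : f n = g 0) :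
    WalkDisp lab (wcat f n g) (n + m) = WalkDisp lab f n + WalkDisp lab g m := by
  unfold WalkDisp
  rw [Finset.sum_range_add]
  congr 1
  · apply Finset.sum_congr rfl
    intro i hi
    rw [Finset.mem_range] at hi
    rw [wcat_left (by omega), wcat_left (by omega)]
  · apply Finset.sum_congr rfl
    intro i hi
    rw [Finset.mem_range] at hi
    have hA : wcat f n g (n + i + 1) = g (i + 1) := by
      rw [wcat_right (by omega)]; congr 1; omega
    have hB : wcat f n g (n + i) = g i := by
      rcases Nat.eq_zero_or_pos i with h | h
      · subst h; rw [Nat.add_zero, wcat_left le_rfl, hb]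
      · rw [wcat_right (by omega)]; congr 1; omega
    rw [hA, hB]

theorem isWalk_prefix {E : V → V → Prop} {f : ℕ → V} {n : ℕ} {a b : V}
    (hw : IsWalk E f n a b) {i : ℕ} (hi : i ≤ n) : IsWalk E f i a (f i) :=
  ⟨hw.1, rfl, fun j hj => hw.2.2 j (by omega)⟩

theorem isWalk_shift {E : V → V → Prop} {f : ℕ → V} {n : ℕ} {a b : V}
    (hw : IsWalk E f n a b) {i j : ℕ} (hij : i ≤ j) (hj : j ≤ n) :
    IsWalk E (fun t => f (i + t)) (j - i) (f i) (f j) := by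
  refine ⟨by simp, ?_, ?_⟩
  · show f (i + (j - i)) = f j
    congr 1; omega
  · intro t ht
    show E (f (i + t)) (f (i + t + 1))
    exact hw.2.2 (i + t) (by omega)

theorem walkDisp_split (lab : V → V → ℤ × ℤ) (f : ℕ → V) {i j : ℕ} (hij : i ≤ j) :
    WalkDisp lab f j = WalkDisp lab f i + WalkDisp lab (fun t => f (i + t)) (j - i) := by
  unfold WalkDisp
  have h : j = i + (j - i) := by omega
  rw [h, Finset.sum_range_add]
  have h2 : i + (j - i) - i = j - i := by omega
  rw [h2]
  rfl

theorem reach_seg {E : V → V → Prop} {f : ℕ → V} {n : ℕ} {a b : V}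
    (hw : IsWalk E f n a b) {i j : ℕ} (hij : i ≤ j) (hj : j ≤ n) :
    Reach E (f i) (f j) := by
  obtain ⟨k, hk⟩ : ∃ k, j = i + k := ⟨j - i, by omega⟩
  subst hk
  induction k with
  | zero => exact Relation.ReflTransGen.refl
  | succ k ih =>
    exact Relation.ReflTransGen.tail (ih (by omega) (by omega))
      (hw.2.2 (i + k) (by omega))

theorem reach_walk {E : V → V → Prop} {f : ℕ → V} {n : ℕ} {a b : V}
    (hw : IsWalk E f n a b) : Reach E a b := by
  have := reach_seg hw (Nat.zero_le n) le_rfl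
  rwa [hw.1, hw.2.1] at this

theorem walk_of_reach {E : V → V → Prop} {a b : V} (h : Reach E a b) :
    ∃ f n, IsWalk E f n a b := by
  induction h with
  | refl => exact ⟨fun _ => a, 0, rfl, rfl, fun i hi => absurd hi (by omega)⟩
  | @tail b' c hr he ih =>
    obtain ⟨f, n, hf⟩ := ih
    refine ⟨fun t => if t ≤ n then f t else c, n + 1, ?_, ?_, ?_⟩
    · simp [hf.1]
    · simp
    · intro i hi
      rcases Nat.lt_or_ge i n with h1 | h1
      · have e1 : i ≤ n := by omega
        have e2 : i + 1 ≤ n := by omega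
        simp only [e1, e2, if_true]
        exact hf.2.2 i h1
      · have h2 : i = n := by omega
        subst h2
        simp only [le_refl, if_true, Nat.add_sub_cancel]
        have : ¬ (i + 1 ≤ i) := by omega
        simp only [this, if_false]
        rw [hf.2.1]
        exact he

theorem cyclic_of_repeat {E : V → V → Prop} {f : ℕ → V} {n : ℕ} {a b : V}
    (hw : IsWalk E f n a b) {i j : ℕ} (hij : i < j) (hj : j ≤ n) (hrep : f i = f j) :
    Cyclic E (f i) := by
  refine ⟨f (i + 1), hw.2.2 i (by omega), ?_⟩
  have := reach_seg hw (show i + 1 ≤ j by omega) hj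
  rwa [← hrep] at this

theorem sameCycle_refl {E : V → V → Prop} (v : V) : SameCycle E v v :=
  ⟨Relation.ReflTransGen.refl, Relation.ReflTransGen.refl⟩

theorem sameCycle_symm {E : V → V → Prop} {u v : V} (h : SameCycle E u v) : SameCycle E v u :=
  ⟨h.2, h.1⟩

theorem sameCycle_trans {E : V → V → Prop} {u v w : V} (h1 : SameCycle E u v)
    (h2 : SameCycle E v w) : SameCycle E u w :=
  ⟨Relation.ReflTransGen.trans h1.1 h2.1, Relation.ReflTransGen.trans h2.2 h1.2⟩

theorem sameCycle_in_loop {E : V → V → Prop} {f : ℕ → V} {n : ℕ} {a b : V}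
    (hw : IsWalk E f n a b) {i j t : ℕ} (hij : i ≤ j) (hj : j ≤ n) (hrep : f i = f j)
    (hit : i ≤ t) (htj : t ≤ j) : SameCycle E (f i) (f t) := by
  constructor
  · exact reach_seg hw hit (by omega)
  · have := reach_seg hw htj hj
    rwa [← hrep] at this

theorem closedwalk_of_cyclic {E : V → V → Prop} {v : V} (h : Cyclic E v) :
    ∃ f n, 0 < n ∧ IsWalk E f n v v := by
  obtain ⟨w, hE, hR⟩ := h
  obtain ⟨g, m, hg⟩ := walk_of_reach hR
  refine ⟨fun t => if t = 0 then v else g (t - 1), m + 1, by omega, rfl, ?_, ?_⟩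
  · simp [hg.2.1]
  · intro i hi
    rcases Nat.eq_zero_or_pos i with h1 | h1
    · subst h1
      simp only [if_true]
      have : ¬ (0 + 1 = 0) := by omega
      simp only [this, if_false]
      show E v (g (0 + 1 - 1))
      have : (0:ℕ) + 1 - 1 = 0 := by omega
      rw [this, hg.1]
      exact hE
    · have e1 : ¬ (i = 0) := by omega
      have e2 : ¬ (i + 1 = 0) := by omega
      simp only [e1, e2, if_false]
      have e3 : i + 1 - 1 = (i - 1) + 1 := by omega
      rw [e3]
      exact hg.2.2 (i - 1) (by omega)

theorem exists_min_cycle {E : V → V → Prop} {v : V} (hv : Cyclic E v) :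
    ∃ p z, 0 < p ∧ IsWalk E z p v v ∧
      (∀ p', 0 < p' → (∃ z', IsWalk E z' p' v v) → p ≤ p') := by
  classical
  obtain ⟨f, n, hn, hf⟩ := closedwalk_of_cyclic hv
  have hex : ∃ p, 0 < p ∧ ∃ z, IsWalk E z p v v := ⟨n, hn, f, hf⟩
  obtain ⟨z, hz⟩ := (Nat.find_spec hex).2
  exact ⟨Nat.find hex, z, (Nat.find_spec hex).1, hz,
    fun p' hp' hz' => Nat.find_min' hex ⟨hp', hz'⟩⟩

/-- periodic repetition of a closed walk -/
def wrep (z : ℕ → V) (p : ℕ) : ℕ → V := fun t => z (t % p)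

theorem isWalk_wrep {E : V → V → Prop} {z : ℕ → V} {p : ℕ} {v : V}
    (hz : IsWalk E z p v v) (hp : 0 < p) (k : ℕ) :
    IsWalk E (wrep z p) (k * p) v v := by
  refine ⟨?_, ?_, ?_⟩
  · show z (0 % p) = v
    rw [Nat.zero_mod]; exact hz.1
  · show z (k * p % p) = v
    rw [Nat.mul_mod_left]; exact hz.1
  · intro i hi
    show E (z (i % p)) (z ((i + 1) % p))
    have h1 : i % p < p := Nat.mod_lt _ hp
    have hstep := hz.2.2 (i % p) h1
    have hkey : (i + 1) % p = (i % p + 1) % p := (Nat.mod_add_mod i p 1).symm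
    rcases Nat.lt_or_ge (i % p + 1) p with h2 | h2
    · have : (i + 1) % p = i % p + 1 := by rw [hkey]; exact Nat.mod_eq_of_lt h2
      rw [this]; exact hstep
    · have h3 : i % p + 1 = p := by omega
      have h4 : (i + 1) % p = 0 := by rw [hkey, h3, Nat.mod_self]
      rw [h4, hz.1, ← hz.2.1]
      have := hstep
      rw [h3] at this
      exact this

theorem walkDisp_wrep (lab : V → V → ℤ × ℤ) {z : ℕ → V} {p : ℕ} {v : V}
    (hz : IsWalk E z p v v) (hp : 0 < p) (k : ℕ) :
    WalkDisp lab (wrep z p) (k * p) = k • WalkDisp lab z p := by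
  induction k with
  | zero => simp [WalkDisp]
  | succ k ih =>
    have h1 : (k + 1) * p = k * p + p := by ring
    rw [h1]
    unfold WalkDisp at ih ⊢
    rw [Finset.sum_range_add, ih]
    have h2 : ∀ j < p, lab (wrep z p (k * p + j)) (wrep z p (k * p + j + 1))
        = lab (z j) (z (j + 1)) := by
      intro j hj
      show lab (z ((k * p + j) % p)) (z ((k * p + j + 1) % p)) = _
      have e1 : (k * p + j) % p = j := by
        rw [Nat.add_comm, Nat.add_mul_mod_self_right]
        exact Nat.mod_eq_of_lt hj
      have e0 : k * p + j + 1 = (j + 1) + k * p := by omega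
      rcases Nat.lt_or_ge (j + 1) p with h2 | h2
      · have e2 : (k * p + j + 1) % p = j + 1 := by
          rw [e0, Nat.add_mul_mod_self_right]
          exact Nat.mod_eq_of_lt h2
        rw [e1, e2]
      · have h3 : j + 1 = p := by omega
        have e2 : (k * p + j + 1) % p = 0 := by
          rw [e0, Nat.add_mul_mod_self_right, h3, Nat.mod_self]
        rw [e1, e2, hz.1, ← hz.2.1]
        have h5 : p = j + 1 := h3.symm
        rw [h5]
    rw [Finset.sum_congr rfl (fun j hj => h2 j (Finset.mem_range.1 hj))]
    rw [succ_nsmul]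

theorem zsmul_cancel {w : ℤ × ℤ} (hw : w ≠ 0) {α β : ℤ} (h : α • w = β • w) : α = β := by
  rcases w with ⟨x, y⟩
  simp only [Prod.smul_mk, Prod.mk.injEq, smul_eq_mul] at h
  have hxy : ¬ (x = 0 ∧ y = 0) := by
    intro hc
    exact hw (by simp [Prod.ext_iff, hc.1, hc.2])
  rcases Classical.em (x = 0) with hx | hx
  · have hy : y ≠ 0 := fun hy => hxy ⟨hx, hy⟩
    exact mul_right_cancel₀ hy h.2
  · exact mul_right_cancel₀ hx h.1

/-- every closed walk at `v` has displacement a multiple of the minimal cycle's. -/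
theorem closed_walk_disp {E : V → V → Prop} (lab : V → V → ℤ × ℤ) {r : V}
    (hreach : ∀ x : V, ∃ f n, IsWalk E f n r x)
    (hdistinct : ∀ (f g : ℕ → V) (n k : ℕ) (x y : V),
      IsWalk E f n r x → IsWalk E g k r y → WalkDisp lab f n = WalkDisp lab g k →
      n = k ∧ ∀ i ≤ n, f i = g i)
    {v : V} {z : ℕ → V} {p : ℕ} (hp : 0 < p) (hz : IsWalk E z p v v)
    (hmin : ∀ p', 0 < p' → (∃ z', IsWalk E z' p' v v) → p ≤ p') :
    ∀ n g, IsWalk E g n v v → ∃ k, WalkDisp lab g n = k • WalkDisp lab z p ∧ n = k * p := by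
  intro n
  induction n using Nat.strong_induction_on with
  | _ n ih =>
  intro g hg
  rcases Nat.eq_zero_or_pos n with hn | hn
  · subst hn
    exact ⟨0, by simp [WalkDisp], by simp⟩
  have hpn : p ≤ n := hmin n hn ⟨g, hg⟩
  obtain ⟨q, nq, hq⟩ := hreach v
  have W1 : IsWalk E (wcat (wcat q nq g) (nq + n) z) ((nq + n) + p) r v :=
    isWalk_wcat (isWalk_wcat hq hg) hz
  have W2 : IsWalk E (wcat (wcat q nq z) (nq + p) g) ((nq + p) + n) r v :=
    isWalk_wcat (isWalk_wcat hq hz) hg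
  have b1 : q nq = g 0 := by rw [hq.2.1, hg.1]
  have b1' : q nq = z 0 := by rw [hq.2.1, hz.1]
  have b2 : (wcat q nq g) (nq + n) = z 0 := by
    rw [wcat_right (by omega)]
    have e : nq + n - nq = n := by omega
    rw [e, hg.2.1, hz.1]
  have b2' : (wcat q nq z) (nq + p) = g 0 := by
    rw [wcat_right (by omega)]
    have e : nq + p - nq = p := by omega
    rw [e, hz.2.1, hg.1]
  have hd1 : WalkDisp lab (wcat (wcat q nq g) (nq + n) z) ((nq + n) + p)
      = WalkDisp lab q nq + WalkDisp lab g n + WalkDisp lab z p := by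
    rw [walkDisp_wcat lab b2, walkDisp_wcat lab b1]
  have hd2 : WalkDisp lab (wcat (wcat q nq z) (nq + p) g) ((nq + p) + n)
      = WalkDisp lab q nq + WalkDisp lab z p + WalkDisp lab g n := by
    rw [walkDisp_wcat lab b2', walkDisp_wcat lab b1']
  have hpt := hdistinct _ _ _ _ v v W1 W2 (by rw [hd1, hd2]; ring)
  have hagree : ∀ t ≤ p, g t = z t := by
    intro t ht
    rcases Nat.eq_zero_or_pos t with h0 | h0
    · subst h0; rw [hg.1, hz.1]
    have h := hpt.2 (nq + t) (by omega)
    have e1 : wcat (wcat q nq g) (nq + n) z (nq + t) = g t := by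
      rw [wcat_left (show nq + t ≤ nq + n by omega),
        wcat_right (show nq < nq + t by omega)]
      congr 1; omega
    have e2 : wcat (wcat q nq z) (nq + p) g (nq + t) = z t := by
      rw [wcat_left (show nq + t ≤ nq + p by omega),
        wcat_right (show nq < nq + t by omega)]
      congr 1; omega
    rw [e1, e2] at h
    exact h
  have gp : g p = v := by rw [hagree p le_rfl, hz.2.1]
  have tail : IsWalk E (fun s => g (p + s)) (n - p) v v := by
    have := isWalk_shift hg hpn le_rfl
    rwa [gp, hg.2.1] at this
  obtain ⟨k', hk1, hk2⟩ := ih (n - p) (by omega) _ tail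
  refine ⟨k' + 1, ?_, ?_⟩
  · rw [walkDisp_split lab g hpn, walkDisp_congr lab (fun i hi => hagree i hi), hk1,
      succ_nsmul]
    ring
  · have e : (k' + 1) * p = k' * p + p := by ring
    omega

/-- relation between minimal-cycle displacements of mutually reachable vertices. -/
theorem rel_lemma {E : V → V → Prop} (lab : V → V → ℤ × ℤ) {r : V}
    (hreach : ∀ x : V, ∃ f n, IsWalk E f n r x)
    (hdistinct : ∀ (f g : ℕ → V) (n k : ℕ) (x y : V),
      IsWalk E f n r x → IsWalk E g k r y → WalkDisp lab f n = WalkDisp lab g k →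
      n = k ∧ ∀ i ≤ n, f i = g i)
    {u v : V} {zu zv : ℕ → V} {pu pv : ℕ}
    (hpu : 0 < pu) (hzu : IsWalk E zu pu u u)
    (hpv : 0 < pv) (hzv : IsWalk E zv pv v v)
    (hminv : ∀ p', 0 < p' → (∃ z', IsWalk E z' p' v v) → pv ≤ p')
    (hvu : Reach E v u) (huv : Reach E u v) :
    ∃ J : ℕ → ℕ, ∀ m : ℕ,
      (m : ℤ) • WalkDisp lab zu pu
        = ((J m : ℤ) - (J 0 : ℤ)) • WalkDisp lab zv pv := by
  obtain ⟨q, nq, hq⟩ := walk_of_reach hvu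
  obtain ⟨q', nq', hq'⟩ := walk_of_reach huv
  have key : ∀ m : ℕ, ∃ j : ℕ,
      WalkDisp lab q nq + (m • WalkDisp lab zu pu + WalkDisp lab q' nq')
        = j • WalkDisp lab zv pv := by
    intro m
    have hw : IsWalk E (wcat q nq (wcat (wrep zu pu) (m * pu) q')) (nq + (m * pu + nq')) v v :=
      isWalk_wcat hq (isWalk_wcat (isWalk_wrep hzu hpu m) hq')
    obtain ⟨j, hj, _⟩ := closed_walk_disp lab hreach hdistinct hpv hzv hminv _ _ hw
    have c1 : q nq = wcat (wrep zu pu) (m * pu) q' 0 := by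
      rw [wcat_left (Nat.zero_le _), hq.2.1]
      show _ = zu (0 % pu)
      rw [Nat.zero_mod, hzu.1]
    have c2 : wrep zu pu (m * pu) = q' 0 := by
      show zu (m * pu % pu) = _
      rw [Nat.mul_mod_left, hzu.1, hq'.1]
    have e : WalkDisp lab (wcat q nq (wcat (wrep zu pu) (m * pu) q')) (nq + (m * pu + nq'))
        = WalkDisp lab q nq + (m • WalkDisp lab zu pu + WalkDisp lab q' nq') := by
      rw [walkDisp_wcat lab c1, walkDisp_wcat lab c2, walkDisp_wrep lab hzu hpu m]
    rw [e] at hj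
    exact ⟨j, hj⟩
  choose J hJ using key
  refine ⟨J, fun m => ?_⟩
  have hm := hJ m
  have h0 := hJ 0
  have e : (m • WalkDisp lab zu pu : ℤ × ℤ) = J m • WalkDisp lab zv pv
      - J 0 • WalkDisp lab zv pv := by
    rw [← hm, ← h0, zero_nsmul]
    abel
  rw [natCast_zsmul, e, sub_smul, natCast_zsmul, natCast_zsmul]

/-- minimal-cycle displacements agree across a strongly connected component. -/
theorem minDisp_eq {E : V → V → Prop} (lab : V → V → ℤ × ℤ) {r : V}
    (hreach : ∀ x : V, ∃ f n, IsWalk E f n r x)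
    (hdistinct : ∀ (f g : ℕ → V) (n k : ℕ) (x y : V),
      IsWalk E f n r x → IsWalk E g k r y → WalkDisp lab f n = WalkDisp lab g k →
      n = k ∧ ∀ i ≤ n, f i = g i)
    (hcyc : ∀ (v : V) (f : ℕ → V) (n : ℕ), 0 < n → IsWalk E f n v v →
      WalkDisp lab f n ≠ 0)
    {u v : V} {zu zv : ℕ → V} {pu pv : ℕ}
    (hpu : 0 < pu) (hzu : IsWalk E zu pu u u)
    (hminu : ∀ p', 0 < p' → (∃ z', IsWalk E z' p' u u) → pu ≤ p')
    (hpv : 0 < pv) (hzv : IsWalk E zv pv v v)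
    (hminv : ∀ p', 0 < p' → (∃ z', IsWalk E z' p' v v) → pv ≤ p')
    (huv : SameCycle E u v) :
    WalkDisp lab zu pu = WalkDisp lab zv pv := by
  have hbune : WalkDisp lab zu pu ≠ 0 := hcyc u zu pu hpu hzu
  have hbvne : WalkDisp lab zv pv ≠ 0 := hcyc v zv pv hpv hzv
  obtain ⟨J, hJ⟩ := rel_lemma lab hreach hdistinct hpu hzu hpv hzv hminv huv.2 huv.1
  obtain ⟨K, hK⟩ := rel_lemma lab hreach hdistinct hpv hzv hpu hzu hminu huv.1 huv.2
  have hbu : WalkDisp lab zu pu = ((J 1 : ℤ) - (J 0 : ℤ)) • WalkDisp lab zv pv := by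
    have := hJ 1
    rwa [Nat.cast_one, one_smul] at this
  have hbv : WalkDisp lab zv pv = ((K 1 : ℤ) - (K 0 : ℤ)) • WalkDisp lab zu pu := by
    have := hK 1
    rwa [Nat.cast_one, one_smul] at this
  have hst : ((J 1 : ℤ) - (J 0 : ℤ)) * ((K 1 : ℤ) - (K 0 : ℤ)) = 1 := by
    apply zsmul_cancel hbune
    rw [one_smul, mul_smul, ← hbv, ← hbu]
  rcases Int.isUnit_iff.mp (IsUnit.of_mul_eq_one _ hst) with h1 | h1
  · rw [hbu, h1, one_smul]
  · exfalso
    have hbu' : WalkDisp lab zu pu = -WalkDisp lab zv pv := by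
      rw [hbu, h1, neg_smul, one_smul]
    have hrel := hJ (J 0 + 1)
    rw [hbu', smul_neg, ← neg_smul] at hrel
    have hcanc := zsmul_cancel hbvne hrel
    omega

theorem exists_simple_walk {E : V → V → Prop} {r x : V} :
    ∀ n (f : ℕ → V), IsWalk E f n r x →
    ∃ h nh, IsWalk E h nh r x ∧ (∀ i j, i ≤ nh → j ≤ nh → h i = h j → i = j) := by
  intro n
  induction n using Nat.strong_induction_on with
  | _ n ih =>
  intro f hf
  by_cases hinj : ∀ i j, i ≤ n → j ≤ n → f i = f j → i = j
  · exact ⟨f, n, hf, hinj⟩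
  · push_neg at hinj
    obtain ⟨i0, j0, hi0, hj0, hrep0, hne0⟩ := hinj
    obtain ⟨a, b, hab, hbn, hfab⟩ : ∃ a b, a < b ∧ b ≤ n ∧ f a = f b := by
      rcases Nat.lt_or_ge i0 j0 with hlt | hge
      · exact ⟨i0, j0, hlt, hj0, hrep0⟩
      · exact ⟨j0, i0, by omega, hi0, hrep0.symm⟩
    have hw1 : IsWalk E f a r (f a) := isWalk_prefix hf (by omega)
    have hw2 : IsWalk E (fun s => f (b + s)) (n - b) (f a) x := by
      have hsh := isWalk_shift hf (show b ≤ n from hbn) le_rfl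
      rw [hf.2.1] at hsh
      rwa [← hfab] at hsh
    exact ih (a + (n - b)) (by omega) _ (isWalk_wcat hw1 hw2)

theorem vertex_classify {E : V → V → Prop} {r x : V} {h : ℕ → V} {nh : ℕ}
    (hh : IsWalk E h nh r x) (hinj : ∀ i j, i ≤ nh → j ≤ nh → h i = h j → i = j)
    (huniqx : ∀ (f g : ℕ → V) (n k : ℕ), IsWalk E f n r x → IsWalk E g k r x →
      (∀ i j, i ≤ n → j ≤ n → f i = f j → i = j) →
      (∀ i j, i ≤ k → j ≤ k → g i = g j → i = j) →
      n = k ∧ ∀ i ≤ n, f i = g i) :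
    ∀ n (g : ℕ → V), IsWalk E g n r x → ∀ t ≤ n,
      ∃ j ≤ nh, g t = h j ∨ (Cyclic E (h j) ∧ SameCycle E (g t) (h j)) := by
  intro n
  induction n using Nat.strong_induction_on with
  | _ n ih =>
  intro g hg t ht
  by_cases hginj : ∀ i j, i ≤ n → j ≤ n → g i = g j → i = j
  · obtain ⟨hn, hpt⟩ := huniqx g h n nh hg hh hginj hinj
    exact ⟨t, by omega, Or.inl (hpt t ht)⟩
  · push_neg at hginj
    obtain ⟨i0, j0, hi0, hj0, hrep0, hne0⟩ := hginj
    obtain ⟨a, b, hab, hbn, hfab⟩ : ∃ a b, a < b ∧ b ≤ n ∧ g a = g b := by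
      rcases Nat.lt_or_ge i0 j0 with hlt | hge
      · exact ⟨i0, j0, hlt, hj0, hrep0⟩
      · exact ⟨j0, i0, by omega, hi0, hrep0.symm⟩
    have hw1 : IsWalk E g a r (g a) := isWalk_prefix hg (by omega)
    have hw2 : IsWalk E (fun s => g (b + s)) (n - b) (g a) x := by
      have hsh := isWalk_shift hg (show b ≤ n from hbn) le_rfl
      rw [hg.2.1] at hsh
      rwa [← hfab] at hsh
    have hcat : IsWalk E (wcat g a (fun s => g (b + s))) (a + (n - b)) r x :=
      isWalk_wcat hw1 hw2
    have hlen : a + (n - b) < n := by omega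
    have hcyca : Cyclic E (g a) := cyclic_of_repeat hg hab hbn hfab
    rcases Nat.lt_or_ge t b with htb | htb
    · rcases le_or_gt t a with hta | hta
      · -- t ≤ a : survives in reduced walk at index t
        obtain ⟨j, hj, hc⟩ := ih _ hlen _ hcat t (by omega)
        rw [wcat_left hta] at hc
        exact ⟨j, hj, hc⟩
      · -- a < t < b : in the loop
        have hsc_at : SameCycle E (g a) (g t) :=
          sameCycle_in_loop hg (le_of_lt hab) hbn hfab (le_of_lt hta) (le_of_lt htb)
        obtain ⟨j, hj, hc⟩ := ih _ hlen _ hcat a (by omega)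
        rw [wcat_left le_rfl] at hc
        rcases hc with he | ⟨hcj, hsc⟩
        · refine ⟨j, hj, Or.inr ⟨?_, ?_⟩⟩
          · rw [← he]; exact hcyca
          · rw [← he]; exact sameCycle_symm hsc_at
        · exact ⟨j, hj, Or.inr ⟨hcj, sameCycle_trans (sameCycle_symm hsc_at) hsc⟩⟩
    · -- t ≥ b : survives at index a + (t - b)
      obtain ⟨j, hj, hc⟩ := ih _ hlen _ hcat (a + (t - b)) (by omega)
      have he : wcat g a (fun s => g (b + s)) (a + (t - b)) = g t := by
        rcases Nat.eq_or_lt_of_le htb with hb1 | hb1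
        · have e : a + (b - b) = a := by omega
          rw [← hb1, e, wcat_left le_rfl]
          exact hfab
        · rw [wcat_right (show a < a + (t - b) by omega)]
          show g (b + (a + (t - b) - a)) = g t
          congr 1; omega
      rw [he] at hc
      exact ⟨j, hj, hc⟩

theorem cover_subset {E : V → V → Prop} (lab : V → V → ℤ × ℤ) {r x : V} {h : ℕ → V} {nh : ℕ}
    (hreach : ∀ y : V, ∃ f n, IsWalk E f n r y)
    (hdistinct : ∀ (f g : ℕ → V) (n k : ℕ) (x y : V),
      IsWalk E f n r x → IsWalk E g k r y → WalkDisp lab f n = WalkDisp lab g k →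
      n = k ∧ ∀ i ≤ n, f i = g i)
    (hh : IsWalk E h nh r x) (hinj : ∀ i j, i ≤ nh → j ≤ nh → h i = h j → i = j)
    (huniqx : ∀ (f g : ℕ → V) (n k : ℕ), IsWalk E f n r x → IsWalk E g k r x →
      (∀ i j, i ≤ n → j ≤ n → f i = f j → i = j) →
      (∀ i j, i ≤ k → j ≤ k → g i = g j → i = j) →
      n = k ∧ ∀ i ≤ n, f i = g i)
    (b c : ℤ × ℤ)
    (hB : ∀ (u : V), Cyclic E u → (∃ j ≤ nh, Cyclic E (h j) ∧ SameCycle E u (h j)) →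
      ∃ p z, 0 < p ∧ IsWalk E z p u u ∧
        (∀ p', 0 < p' → (∃ z', IsWalk E z' p' u u) → p ≤ p') ∧
        (WalkDisp lab z p = b ∨ WalkDisp lab z p = c)) :
    ∀ n (g : ℕ → V), IsWalk E g n r x →
      ∃ m k : ℕ, WalkDisp lab g n = WalkDisp lab h nh + m • b + k • c := by
  intro n
  induction n using Nat.strong_induction_on with
  | _ n ih =>
  intro g hg
  by_cases hginj : ∀ i j, i ≤ n → j ≤ n → g i = g j → i = j
  · obtain ⟨hn, hpt⟩ := huniqx g h n nh hg hh hginj hinj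
    refine ⟨0, 0, ?_⟩
    subst hn
    rw [walkDisp_congr lab hpt]
    simp
  · push_neg at hginj
    obtain ⟨i0, j0, hi0, hj0, hrep0, hne0⟩ := hginj
    obtain ⟨a, b', hab, hbn, hfab⟩ : ∃ a b', a < b' ∧ b' ≤ n ∧ g a = g b' := by
      rcases Nat.lt_or_ge i0 j0 with hlt | hge
      · exact ⟨i0, j0, hlt, hj0, hrep0⟩
      · exact ⟨j0, i0, by omega, hi0, hrep0.symm⟩
    have hw1 : IsWalk E g a r (g a) := isWalk_prefix hg (by omega)
    have hw2 : IsWalk E (fun s => g (b' + s)) (n - b') (g a) x := by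
      have hsh := isWalk_shift hg (show b' ≤ n from hbn) le_rfl
      rw [hg.2.1] at hsh
      rwa [← hfab] at hsh
    have hcat : IsWalk E (wcat g a (fun s => g (b' + s))) (a + (n - b')) r x :=
      isWalk_wcat hw1 hw2
    have hloop : IsWalk E (fun s => g (a + s)) (b' - a) (g a) (g a) := by
      have hsh := isWalk_shift hg (le_of_lt hab) hbn
      rwa [← hfab] at hsh
    have hcyca : Cyclic E (g a) := cyclic_of_repeat hg hab hbn hfab
    obtain ⟨j1, hj1, hc1⟩ := vertex_classify hh hinj huniqx n g hg a (by omega)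
    have hrelate : ∃ j ≤ nh, Cyclic E (h j) ∧ SameCycle E (g a) (h j) := by
      rcases hc1 with he | ⟨hcj, hsc⟩
      · exact ⟨j1, hj1, by rw [← he]; exact hcyca, by rw [← he]; exact sameCycle_refl _⟩
      · exact ⟨j1, hj1, hcj, hsc⟩
    obtain ⟨p, z, hp, hz, hmin, hbc⟩ := hB (g a) hcyca hrelate
    obtain ⟨k, hkd, hkl⟩ := closed_walk_disp lab hreach hdistinct hp hz hmin (b' - a) _ hloop
    obtain ⟨m', k', hmk⟩ := ih (a + (n - b')) (by omega) _ hcat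
    have hdisp : WalkDisp lab g n
        = WalkDisp lab (wcat g a (fun s => g (b' + s))) (a + (n - b'))
          + WalkDisp lab (fun s => g (a + s)) (b' - a) := by
      have s1 := walkDisp_split lab g hbn
      have s2 := walkDisp_split lab g (le_of_lt hab)
      have s3 : WalkDisp lab (wcat g a (fun s => g (b' + s))) (a + (n - b'))
          = WalkDisp lab g a + WalkDisp lab (fun s => g (b' + s)) (n - b') := by
        apply walkDisp_wcat lab
        show g a = g (b' + 0)
        rw [Nat.add_zero]
        exact hfab
      rw [s1, s2, s3]
      ring
    rcases hbc with hbb | hcc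
    · refine ⟨m' + k, k', ?_⟩
      rw [hdisp, hmk, hkd, hbb, add_nsmul]
      ring
    · refine ⟨m', k' + k, ?_⟩
      rw [hdisp, hmk, hkd, hcc, add_nsmul]
      ring

theorem ins2_spec {E : V → V → Prop} (lab : V → V → ℤ × ℤ) {r x : V} {h : ℕ → V} {nh : ℕ}
    (hh : IsWalk E h nh r x)
    {i0 j0 : ℕ} (hij : i0 ≤ j0) (hjn : j0 ≤ nh)
    {z1 z2 : ℕ → V} {p1 p2 : ℕ}
    (hp1 : 0 < p1) (hz1 : IsWalk E z1 p1 (h i0) (h i0))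
    (hp2 : 0 < p2) (hz2 : IsWalk E z2 p2 (h j0) (h j0))
    (m n : ℕ) :
    ∃ g, IsWalk E g (nh + (m * p1 + n * p2)) r x ∧
      WalkDisp lab g (nh + (m * p1 + n * p2))
        = WalkDisp lab h nh + m • WalkDisp lab z1 p1 + n • WalkDisp lab z2 p2 ∧
      (∀ t, t ≤ i0 → g t = h t) ∧
      (∀ t, i0 < t → t ≤ i0 + m * p1 → g t = z1 ((t - i0) % p1)) ∧
      (∀ t, i0 + m * p1 < t → t ≤ j0 + m * p1 → g t = h (t - m * p1)) ∧
      (∀ t, j0 + m * p1 < t → t ≤ j0 + m * p1 + n * p2 →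
        g t = z2 ((t - (j0 + m * p1)) % p2)) := by
  set R4 : ℕ → V := fun s => h (j0 + s) with hR4
  set R3 : ℕ → V := wcat (wrep z2 p2) (n * p2) R4 with hR3
  set mid : ℕ → V := fun s => h (i0 + s) with hmid
  set R2 : ℕ → V := wcat mid (j0 - i0) R3 with hR2
  set R1 : ℕ → V := wcat (wrep z1 p1) (m * p1) R2 with hR1
  set g : ℕ → V := wcat h i0 R1 with hgdef
  have wA : IsWalk E h i0 r (h i0) := isWalk_prefix hh (by omega)
  have wB : IsWalk E (wrep z1 p1) (m * p1) (h i0) (h i0) := isWalk_wrep hz1 hp1 m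
  have wC : IsWalk E mid (j0 - i0) (h i0) (h j0) := isWalk_shift hh hij hjn
  have wD : IsWalk E (wrep z2 p2) (n * p2) (h j0) (h j0) := isWalk_wrep hz2 hp2 n
  have wE : IsWalk E R4 (nh - j0) (h j0) x := by
    have := isWalk_shift hh hjn le_rfl
    rwa [hh.2.1] at this
  have wR3 : IsWalk E R3 (n * p2 + (nh - j0)) (h j0) x := isWalk_wcat wD wE
  have wR2 : IsWalk E R2 ((j0 - i0) + (n * p2 + (nh - j0))) (h i0) x := isWalk_wcat wC wR3
  have wR1 : IsWalk E R1 (m * p1 + ((j0 - i0) + (n * p2 + (nh - j0)))) (h i0) x :=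
    isWalk_wcat wB wR2
  have wG : IsWalk E g (i0 + (m * p1 + ((j0 - i0) + (n * p2 + (nh - j0))))) r x :=
    isWalk_wcat wA wR1
  have etot : i0 + (m * p1 + ((j0 - i0) + (n * p2 + (nh - j0)))) = nh + (m * p1 + n * p2) := by
    omega
  rw [etot] at wG
  -- displacement
  have c1 : h i0 = R1 0 := by
    rw [hR1, wcat_left (Nat.zero_le _)]
    show _ = z1 (0 % p1)
    rw [Nat.zero_mod, hz1.1]
  have c2 : wrep z1 p1 (m * p1) = R2 0 := by
    rw [hR2, wcat_left (Nat.zero_le _)]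
    show z1 (m * p1 % p1) = h (i0 + 0)
    rw [Nat.mul_mod_left, hz1.1, Nat.add_zero]
  have c3 : mid (j0 - i0) = R3 0 := by
    rw [hR3, wcat_left (Nat.zero_le _)]
    show h (i0 + (j0 - i0)) = z2 (0 % p2)
    rw [Nat.zero_mod, hz2.1]
    congr 1
    omega
  have c4 : wrep z2 p2 (n * p2) = R4 0 := by
    show z2 (n * p2 % p2) = h (j0 + 0)
    rw [Nat.mul_mod_left, hz2.1, Nat.add_zero]
  have dG : WalkDisp lab g (nh + (m * p1 + n * p2))
      = WalkDisp lab h nh + m • WalkDisp lab z1 p1 + n • WalkDisp lab z2 p2 := by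
    rw [← etot, hgdef, walkDisp_wcat lab c1, hR1, walkDisp_wcat lab c2, hR2,
      walkDisp_wcat lab c3, hR3, walkDisp_wcat lab c4,
      walkDisp_wrep lab hz1 hp1 m, walkDisp_wrep lab hz2 hp2 n]
    have s1 := walkDisp_split lab h hij
    have s2 := walkDisp_split lab h hjn
    rw [← hmid] at s1
    rw [← hR4] at s2
    rw [s2, s1]
    ring
  refine ⟨g, wG, dG, ?_, ?_, ?_, ?_⟩
  · intro t ht
    rw [hgdef, wcat_left ht]
  · intro t ht1 ht2
    rw [hgdef, wcat_right ht1, hR1, wcat_left (by omega)]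
    rfl
  · intro t ht1 ht2
    rw [hgdef, wcat_right (by omega), hR1, wcat_right (by omega), hR2,
      wcat_left (by omega)]
    show h (i0 + (t - i0 - m * p1)) = _
    congr 1
    omega
  · intro t ht1 ht2
    rw [hgdef, wcat_right (by omega), hR1, wcat_right (by omega), hR2,
      wcat_right (by omega), hR3, wcat_left (by omega)]
    show z2 ((t - i0 - m * p1 - (j0 - i0)) % p2) = _
    congr 2
    omega

theorem sameCycle_vertex {E : V → V → Prop} {z : ℕ → V} {p : ℕ} {v : V}
    (hz : IsWalk E z p v v) {t : ℕ} (ht : t ≤ p) : SameCycle E v (z t) := by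
  constructor
  · have := reach_seg hz (Nat.zero_le t) ht
    rwa [hz.1] at this
  · have := reach_seg hz ht le_rfl
    rwa [hz.2.1] at this

end Q17

theorem stmt17 {V T : Type} [Fintype V] (E : V → V → Prop) (r : V)
    (η : V → T) (lab : V → V → ℤ × ℤ)
    -- arcs are labelled by unit directions
    (hlabdir : ∀ u v, E u v → lab u v ∈ Dir)
    -- from the root there is a (unique) path to each vertex
    (hreach : ∀ x : V, ∃ (f : ℕ → V) (n : ℕ), IsWalk E f n r x)
    (huniq : ∀ (x : V) (f g : ℕ → V) (n k : ℕ), IsWalk E f n r x → IsWalk E g k r x →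
      (∀ i j, i ≤ n → j ≤ n → f i = f j → i = j) →
      (∀ i j, i ≤ k → j ≤ k → g i = g j → i = j) →
      n = k ∧ ∀ i ≤ n, f i = g i)
    -- the arc-labels of every rooted walk form a self-avoiding path in ℤ²
    (hsa : ∀ (x : V) (f : ℕ → V) (n : ℕ), IsWalk E f n r x →
      ∀ i j, i ≤ n → j ≤ n → WalkDisp lab f i = WalkDisp lab f j → i = j)
    -- every cycle has a nonzero displacement vector
    (hcyc : ∀ (v : V) (f : ℕ → V) (n : ℕ), 0 < n → IsWalk E f n v v →
      WalkDisp lab f n ≠ 0)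
    -- every rooted walk meets at most two cycles
    (htwo : ∀ (x : V) (f : ℕ → V) (n : ℕ), IsWalk E f n r x →
      ∀ i j k, i ≤ n → j ≤ n → k ≤ n →
        Cyclic E (f i) → Cyclic E (f j) → Cyclic E (f k) →
        SameCycle E (f i) (f j) ∨ SameCycle E (f i) (f k) ∨ SameCycle E (f j) (f k))
    -- distinct rooted walks have distinct displacement vectors
    (hdistinct : ∀ (f g : ℕ → V) (n k : ℕ) (x y : V),
      IsWalk E f n r x → IsWalk E g k r y → WalkDisp lab f n = WalkDisp lab g k →
      n = k ∧ ∀ i ≤ n, f i = g i) :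
    ∀ x : V,
      -- zero cycles met: the cover is a singleton
      ((∀ (f : ℕ → V) (n : ℕ), IsWalk E f n r x → ∀ i ≤ n, ¬ Cyclic E (f i)) →
        ∃ a : ℤ × ℤ, Cover E lab r x = {a}) ∧
      -- exactly one cycle met: the cover is a + ℕ·b
      (((∃ (f : ℕ → V) (n : ℕ), IsWalk E f n r x ∧ ∃ i ≤ n, Cyclic E (f i)) ∧
        (∀ (f : ℕ → V) (n : ℕ), IsWalk E f n r x → ∀ i j, i ≤ n → j ≤ n →
          Cyclic E (f i) → Cyclic E (f j) → SameCycle E (f i) (f j))) →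
        ∃ a b : ℤ × ℤ, b ≠ 0 ∧
          Cover E lab r x = {s | ∃ n : ℕ, s = a + n • b}) ∧
      -- two cycles met: the cover is a + ℕ·b + ℕ·c
      ((∃ (f : ℕ → V) (n : ℕ), IsWalk E f n r x ∧ ∃ i j, i ≤ n ∧ j ≤ n ∧
          Cyclic E (f i) ∧ Cyclic E (f j) ∧ ¬ SameCycle E (f i) (f j)) →
        ∃ a b c : ℤ × ℤ, b ≠ 0 ∧ c ≠ 0 ∧ b.1 * c.2 ≠ b.2 * c.1 ∧
          Cover E lab r x = {s | ∃ mn : ℕ × ℕ, s = a + mn.1 • b + mn.2 • c}) := by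
  intro x
  obtain ⟨f0, n0, hf0⟩ := hreach x
  obtain ⟨h, nh, hh, hinj⟩ := Q17.exists_simple_walk n0 f0 hf0
  have huniqx := huniq x
  -- helper: from any pair of repeats get an ordered pair
  have horder : ∀ (g : ℕ → V) (n i j : ℕ), i ≤ n → j ≤ n → g i = g j → i ≠ j →
      ∃ a b, a < b ∧ b ≤ n ∧ g a = g b := by
    intro g n i j hi hj hrep hne
    rcases Nat.lt_or_ge i j with hlt | hge
    · exact ⟨i, j, hlt, hj, hrep⟩
    · exact ⟨j, i, by omega, hi, hrep.symm⟩
  refine ⟨?_, ?_, ?_⟩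
  -- ================== case 0 ==================
  · intro hnone
    refine ⟨WalkDisp lab h nh, ?_⟩
    ext s
    simp only [Cover, Set.mem_setOf_eq, Set.mem_singleton_iff]
    constructor
    · rintro ⟨f, n, hw, rfl⟩
      have hfin : ∀ i j, i ≤ n → j ≤ n → f i = f j → i = j := by
        intro i j hi hj hfe
        by_contra hne
        obtain ⟨a, b, hab, hbn, hfab⟩ := horder f n i j hi hj hfe hne
        exact hnone f n hw a (by omega) (Q17.cyclic_of_repeat hw hab hbn hfab)
      obtain ⟨hn, hpt⟩ := huniqx f h n nh hw hh hfin hinj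
      subst hn
      exact Q17.walkDisp_congr lab hpt
    · rintro rfl
      exact ⟨h, nh, hh, rfl⟩
  -- ================== case 1 ==================
  · rintro ⟨⟨f, n, hw, i, hi, hcyci⟩, hone⟩
    obtain ⟨j1, hj1, hc1⟩ := Q17.vertex_classify hh hinj huniqx n f hw i hi
    have hhc : ∃ j ≤ nh, Cyclic E (h j) := by
      rcases hc1 with he | ⟨hcj, _⟩
      · exact ⟨j1, hj1, he ▸ hcyci⟩
      · exact ⟨j1, hj1, hcj⟩
    obtain ⟨i0, hi0, hcyc0⟩ := hhc
    obtain ⟨p1, z1, hp1, hz1, hmin1⟩ := Q17.exists_min_cycle hcyc0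
    refine ⟨WalkDisp lab h nh, WalkDisp lab z1 p1, hcyc (h i0) z1 p1 hp1 hz1, ?_⟩
    have hB : ∀ (u : V), Cyclic E u →
        (∃ j ≤ nh, Cyclic E (h j) ∧ SameCycle E u (h j)) →
        ∃ p z, 0 < p ∧ IsWalk E z p u u ∧
          (∀ p', 0 < p' → (∃ z', IsWalk E z' p' u u) → p ≤ p') ∧
          (WalkDisp lab z p = WalkDisp lab z1 p1 ∨
            WalkDisp lab z p = WalkDisp lab z1 p1) := by
      intro u hcu ⟨j, hj, hcj, hsc⟩
      obtain ⟨pu, zu, hpu, hzu, hminu⟩ := Q17.exists_min_cycle hcu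
      obtain ⟨pj, zj, hpj, hzj, hminj⟩ := Q17.exists_min_cycle hcj
      refine ⟨pu, zu, hpu, hzu, hminu, Or.inl ?_⟩
      have e1 := Q17.minDisp_eq lab hreach hdistinct hcyc hpu hzu hminu hpj hzj hminj hsc
      have hscj : SameCycle E (h j) (h i0) := hone h nh hh j i0 hj hi0 hcj hcyc0
      have e2 := Q17.minDisp_eq lab hreach hdistinct hcyc hpj hzj hminj hp1 hz1 hmin1 hscj
      rw [e1, e2]
    ext s
    simp only [Cover, Set.mem_setOf_eq]
    constructor
    · rintro ⟨f', n', hw', rfl⟩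
      obtain ⟨m, k, hmk⟩ := Q17.cover_subset lab hreach hdistinct hh hinj huniqx
        (WalkDisp lab z1 p1) (WalkDisp lab z1 p1) hB n' f' hw'
      refine ⟨m + k, ?_⟩
      rw [hmk, add_nsmul]
      ring
    · rintro ⟨k, rfl⟩
      obtain ⟨g, hwg, hdg, -, -, -, -⟩ :=
        Q17.ins2_spec lab hh (le_rfl : i0 ≤ i0) hi0 hp1 hz1 hp1 hz1 k 0
      refine ⟨g, nh + (k * p1 + 0 * p1), hwg, ?_⟩
      rw [hdg, zero_nsmul, add_zero]
  -- ================== case 2 ==================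
  · rintro ⟨f, n, hw, i, j, hi, hj, hci, hcj, hnsc⟩
    obtain ⟨j1, hj1, hc1⟩ := Q17.vertex_classify hh hinj huniqx n f hw i hi
    obtain ⟨j2, hj2, hc2⟩ := Q17.vertex_classify hh hinj huniqx n f hw j hj
    have h1 : Cyclic E (h j1) ∧ SameCycle E (f i) (h j1) := by
      rcases hc1 with he | ⟨hcj', hsc⟩
      · exact ⟨he ▸ hci, he ▸ Q17.sameCycle_refl _⟩
      · exact ⟨hcj', hsc⟩
    have h2 : Cyclic E (h j2) ∧ SameCycle E (f j) (h j2) := by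
      rcases hc2 with he | ⟨hcj', hsc⟩
      · exact ⟨he ▸ hcj, he ▸ Q17.sameCycle_refl _⟩
      · exact ⟨hcj', hsc⟩
    have hnsc12 : ¬ SameCycle E (h j1) (h j2) := by
      intro hcon
      exact hnsc (Q17.sameCycle_trans h1.2
        (Q17.sameCycle_trans hcon (Q17.sameCycle_symm h2.2)))
    -- main argument for an ordered pair of positions
    have main : ∀ (i0 j0 : ℕ), i0 ≤ j0 → j0 ≤ nh → Cyclic E (h i0) → Cyclic E (h j0) →
        ¬ SameCycle E (h i0) (h j0) →
        ∃ a b c : ℤ × ℤ, b ≠ 0 ∧ c ≠ 0 ∧ b.1 * c.2 ≠ b.2 * c.1 ∧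
          Cover E lab r x = {s | ∃ mn : ℕ × ℕ, s = a + mn.1 • b + mn.2 • c} := by
      intro i0 j0 hij0 hj0n hcyc0 hcyc0' hnsc0
      have hi0n : i0 ≤ nh := le_trans hij0 hj0n
      obtain ⟨p1, z1, hp1, hz1, hmin1⟩ := Q17.exists_min_cycle hcyc0
      obtain ⟨p2, z2, hp2, hz2, hmin2⟩ := Q17.exists_min_cycle hcyc0'
      set b := WalkDisp lab z1 p1 with hbdef
      set c := WalkDisp lab z2 p2 with hcdef
      have hbne : b ≠ 0 := hcyc (h i0) z1 p1 hp1 hz1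
      have hcne : c ≠ 0 := hcyc (h j0) z2 p2 hp2 hz2
      refine ⟨WalkDisp lab h nh, b, c, hbne, hcne, ?_, ?_⟩
      -- ---------- noncollinearity ----------
      · intro hcol
        obtain ⟨P, Q, hPne, hQne, hPQ⟩ : ∃ P Q : ℤ, P ≠ 0 ∧ Q ≠ 0 ∧ P • b = Q • c := by
          rcases Classical.em (b.1 = 0) with hb1 | hb1
          · have hb2 : b.2 ≠ 0 := by
              intro h2
              exact hbne (Prod.ext hb1 h2)
            have hc1 : c.1 = 0 := by
              have hcc := hcol
              rw [hb1, zero_mul] at hcc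
              rcases mul_eq_zero.mp hcc.symm with hcc' | hcc'
              · exact absurd hcc' hb2
              · exact hcc'
            refine ⟨c.2, b.2, ?_, hb2, ?_⟩
            · intro h2
              exact hcne (Prod.ext hc1 h2)
            · apply Prod.ext
              · simp only [Prod.smul_fst, smul_eq_mul]
                rw [hb1, hc1]
                ring
              · simp only [Prod.smul_snd, smul_eq_mul]
                ring
          · refine ⟨c.1, b.1, ?_, hb1, ?_⟩
            · intro h1
              have hc2 : c.2 = 0 := by
                have hcc := hcol
                rw [h1, mul_zero] at hcc
                rcases mul_eq_zero.mp hcc with hcc' | hcc'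
                · exact absurd hcc' hb1
                · exact hcc'
              exact hcne (Prod.ext h1 hc2)
            · apply Prod.ext
              · simp only [Prod.smul_fst, smul_eq_mul]
                ring
              · simp only [Prod.smul_snd, smul_eq_mul]
                rw [mul_comm c.1 b.2, ← hcol]
        have key : (∃ p q : ℕ, 0 < p ∧ 0 < q ∧ p • b = q • c) ∨
            (∃ p q : ℕ, 0 < p + q ∧ p • b + q • c = 0) := by
          rcases lt_trichotomy P 0 with hP | hP | hP
          · rcases lt_trichotomy Q 0 with hQ | hQ | hQ
            · -- P<0, Q<0 : (-P)•b = (-Q)•c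
              left
              refine ⟨(-P).toNat, (-Q).toNat, by omega, by omega, ?_⟩
              have e : ((((-P).toNat) : ℤ)) • b = ((((-Q).toNat) : ℤ)) • c := by
                rw [Int.toNat_of_nonneg (by omega), Int.toNat_of_nonneg (by omega),
                  neg_smul, neg_smul, hPQ]
              rwa [natCast_zsmul, natCast_zsmul] at e
            · exact absurd hQ hQne
            · -- P<0, Q>0 : (-P)•b + Q•c = 0
              right
              refine ⟨(-P).toNat, Q.toNat, by omega, ?_⟩
              have e : ((((-P).toNat) : ℤ)) • b + (((Q.toNat) : ℤ)) • c = 0 := by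
                rw [Int.toNat_of_nonneg (by omega), Int.toNat_of_nonneg (by omega),
                  neg_smul, hPQ]
                simp
              rwa [natCast_zsmul, natCast_zsmul] at e
          · exact absurd hP hPne
          · rcases lt_trichotomy Q 0 with hQ | hQ | hQ
            · -- P>0, Q<0 : P•b + (-Q)•c = 0
              right
              refine ⟨P.toNat, (-Q).toNat, by omega, ?_⟩
              have e : (((P.toNat) : ℤ)) • b + ((((-Q).toNat) : ℤ)) • c = 0 := by
                rw [Int.toNat_of_nonneg (by omega), Int.toNat_of_nonneg (by omega),
                  hPQ, neg_smul]
                simp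
              rwa [natCast_zsmul, natCast_zsmul] at e
            · exact absurd hQ hQne
            · -- P>0, Q>0
              left
              refine ⟨P.toNat, Q.toNat, by omega, by omega, ?_⟩
              have e : (((P.toNat) : ℤ)) • b = (((Q.toNat) : ℤ)) • c := by
                rw [Int.toNat_of_nonneg (by omega), Int.toNat_of_nonneg (by omega), hPQ]
              rwa [natCast_zsmul, natCast_zsmul] at e
        rcases key with ⟨p, q, hp, hq, hpq⟩ | ⟨p, q, hpq0, hpq⟩
        · -- |main geometric case|
          obtain ⟨g1, hw1, hd1, v11, v12, v13, v14⟩ :=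
            Q17.ins2_spec lab hh hij0 hj0n hp1 hz1 hp2 hz2 p 0
          obtain ⟨g2, hw2, hd2, v21, v22, v23, v24⟩ :=
            Q17.ins2_spec lab hh hij0 hj0n hp1 hz1 hp2 hz2 0 q
          have hdd : WalkDisp lab g1 (nh + (p * p1 + 0 * p2))
              = WalkDisp lab g2 (nh + (0 * p1 + q * p2)) := by
            rw [hd1, hd2, zero_nsmul, zero_nsmul, add_zero, ← hbdef, ← hcdef, hpq]
            ring
          have hpt := hdistinct g1 g2 _ _ x x hw1 hw2 hdd
          have hlen : p * p1 = q * p2 := by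
            have := hpt.1
            omega
          have hdpos : 0 < p * p1 := Nat.mul_pos hp hp1
          rcases lt_or_ge j0 (i0 + p * p1) with hcase | hcase
          · -- overlapping loop regions at t = j0 + 1
            have ht1 := v12 (j0 + 1) (by omega) (by omega)
            have ht2 := v24 (j0 + 1) (by omega) (by omega)
            have heq : g1 (j0 + 1) = g2 (j0 + 1) := hpt.2 (j0 + 1) (by omega)
            rw [ht1, ht2] at heq
            have hs1 : SameCycle E (h i0) (z1 ((j0 + 1 - i0) % p1)) :=
              Q17.sameCycle_vertex hz1 (le_of_lt (Nat.mod_lt _ hp1))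
            have hs2 : SameCycle E (h j0) (z2 ((j0 + 1 - (j0 + 0 * p1)) % p2)) :=
              Q17.sameCycle_vertex hz2 (le_of_lt (Nat.mod_lt _ hp2))
            rw [heq] at hs1
            exact hnsc0 (Q17.sameCycle_trans hs1 (Q17.sameCycle_symm hs2))
          · -- disjoint regions: t = i0 + p * p1
            have ht1 := v12 (i0 + p * p1) (by omega) (by omega)
            have ht2 := v23 (i0 + p * p1) (by omega) (by omega)
            have heq : g1 (i0 + p * p1) = g2 (i0 + p * p1) := hpt.2 (i0 + p * p1) (by omega)
            rw [ht1, ht2] at heq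
            have e1 : (i0 + p * p1 - i0) % p1 = 0 := by
              have e : i0 + p * p1 - i0 = p * p1 := by omega
              rw [e, Nat.mul_mod_left]
            rw [e1, hz1.1] at heq
            have e2 : i0 + p * p1 - 0 * p1 = i0 + p * p1 := by omega
            rw [e2] at heq
            have := hinj i0 (i0 + p * p1) hi0n (by omega) heq
            omega
        · -- |degenerate case: zero-sum|
          obtain ⟨g1, hw1, hd1, -, -, -, -⟩ :=
            Q17.ins2_spec lab hh hij0 hj0n hp1 hz1 hp2 hz2 p q
          have hdd : WalkDisp lab g1 (nh + (p * p1 + q * p2)) = WalkDisp lab h nh := by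
            rw [hd1, ← hbdef, ← hcdef, add_assoc, hpq, add_zero]
          have hpt := hdistinct g1 h _ _ x x hw1 hh hdd
          have hlen := hpt.1
          have e1 : p * p1 = 0 ∧ q * p2 = 0 := by omega
          have hp0 : p = 0 := by
            rcases Nat.mul_eq_zero.mp e1.1 with h' | h'
            · exact h'
            · omega
          have hq0 : q = 0 := by
            rcases Nat.mul_eq_zero.mp e1.2 with h' | h'
            · exact h'
            · omega
          omega
      -- ---------- cover equality ----------
      · have hB : ∀ (u : V), Cyclic E u →
            (∃ j ≤ nh, Cyclic E (h j) ∧ SameCycle E u (h j)) →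
            ∃ p z, 0 < p ∧ IsWalk E z p u u ∧
              (∀ p', 0 < p' → (∃ z', IsWalk E z' p' u u) → p ≤ p') ∧
              (WalkDisp lab z p = b ∨ WalkDisp lab z p = c) := by
          intro u hcu ⟨j', hj', hcj', hsc⟩
          obtain ⟨pu, zu, hpu, hzu, hminu⟩ := Q17.exists_min_cycle hcu
          obtain ⟨pj, zj, hpj, hzj, hminj⟩ := Q17.exists_min_cycle hcj'
          refine ⟨pu, zu, hpu, hzu, hminu, ?_⟩
          have e1 := Q17.minDisp_eq lab hreach hdistinct hcyc hpu hzu hminu hpj hzj hminj hsc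
          rcases htwo x h nh hh j' i0 j0 hj' hi0n hj0n hcj' hcyc0 hcyc0' with hA | hA | hA
          · left
            have e2 := Q17.minDisp_eq lab hreach hdistinct hcyc hpj hzj hminj hp1 hz1 hmin1 hA
            rw [e1, e2, hbdef]
          · right
            have e2 := Q17.minDisp_eq lab hreach hdistinct hcyc hpj hzj hminj hp2 hz2 hmin2 hA
            rw [e1, e2, hcdef]
          · exact absurd hA hnsc0
        ext s
        simp only [Cover, Set.mem_setOf_eq]
        constructor
        · rintro ⟨f', n', hw', rfl⟩
          obtain ⟨m, k, hmk⟩ := Q17.cover_subset lab hreach hdistinct hh hinj huniqx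
            b c hB n' f' hw'
          exact ⟨(m, k), hmk⟩
        · rintro ⟨⟨m, k⟩, rfl⟩
          obtain ⟨g, hwg, hdg, -, -, -, -⟩ :=
            Q17.ins2_spec lab hh hij0 hj0n hp1 hz1 hp2 hz2 m k
          refine ⟨g, nh + (m * p1 + k * p2), hwg, ?_⟩
          rw [hdg, ← hbdef, ← hcdef]
    rcases le_or_gt j1 j2 with hord | hord
    · exact main j1 j2 hord hj2 h1.1 h2.1 hnsc12
    · exact main j2 j1 (le_of_lt hord) hj1 h2.1 h1.1
        (fun hcon => hnsc12 (Q17.sameCycle_symm hcon))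
end
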